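/- arXiv:1406.4897 — 6 statements merged into one kernel-verified Lean document; each statement's English description precedes it below -/
import Mathlib

section
/- Let G be a group, H a normal subgroup of finite index with G/H abelian, and Π₁, Π₂ irreducible complex representations of G. Then the following are equivalent: (1) the restrictions Π₁|_H and Π₂|_H share an irreducible constituent; (2) Π₁|_H ≅ Π₂|_H; (3) there exists a character χ of G/H with Π₂ ≅ χΠ₁. -/
noncomputable section

open scoped TensorProduct DirectSum

universe u

section Defs

variable {G : Type u} [Group G]

/-- The submodule of equivariant linear maps between two representations. -/
def equivHom {M : Type*} [Monoid M] {V₁ V₂ : Type*}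
    [AddCommGroup V₁] [Module ℂ V₁] [AddCommGroup V₂] [Module ℂ V₂]
    (ρ₁ : Representation ℂ M V₁) (ρ₂ : Representation ℂ M V₂) :
    Submodule ℂ (V₁ →ₗ[ℂ] V₂) where
  carrier := {f | ∀ (m : M) (v : V₁), f (ρ₁ m v) = ρ₂ m (f v)}
  add_mem' := by intro a b ha hb m v; simp_all
  zero_mem' := by intro m v; simp
  smul_mem' := by intro c f hf m v; simp_all

instance equivHom.instAddCommGroup {M : Type*} [Monoid M] {V₁ V₂ : Type*}
    [AddCommGroup V₁] [Module ℂ V₁] [AddCommGroup V₂] [Module ℂ V₂]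
    (ρ₁ : Representation ℂ M V₁) (ρ₂ : Representation ℂ M V₂) :
    AddCommGroup ↥(equivHom ρ₁ ρ₂) :=
  Submodule.addCommGroup _

instance equivHom.instModule {M : Type*} [Monoid M] {V₁ V₂ : Type*}
    [AddCommGroup V₁] [Module ℂ V₁] [AddCommGroup V₂] [Module ℂ V₂]
    (ρ₁ : Representation ℂ M V₁) (ρ₂ : Representation ℂ M V₂) :
    Module ℂ ↥(equivHom ρ₁ ρ₂) :=
  Submodule.module _

/-- Twist of a representation by a `ℂˣ`-valued character. -/
def twist {V : Type*} [AddCommGroup V] [Module ℂ V]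
    (ρ : Representation ℂ G V) (χ : G →* ℂˣ) : Representation ℂ G V where
  toFun g := (χ g : ℂ) • ρ g
  map_one' := by simp
  map_mul' g₁ g₂ := by
    ext v
    simp [Module.End.mul_apply, LinearMap.smul_apply, map_mul, smul_smul,
      map_smul, mul_comm, mul_left_comm]

@[simp] lemma twist_apply {V : Type*} [AddCommGroup V] [Module ℂ V]
    (ρ : Representation ℂ G V) (χ : G →* ℂˣ) (g : G) (v : V) :
    twist ρ χ g v = (χ g : ℂ) • ρ g v := rfl

/-- Characters of `G` trivial on `H`, i.e. characters of `G/H`. -/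
def TrivOn (H : Subgroup G) : Type u := {χ : G →* ℂˣ // ∀ h ∈ H, χ h = 1}

/-- Irreducibility of a representation. -/
def IsIrreducibleRep {M : Type*} [Monoid M] {V : Type*} [AddCommGroup V] [Module ℂ V]
    (ρ : Representation ℂ M V) : Prop :=
  (∃ v : V, v ≠ 0) ∧
    ∀ W : Submodule ℂ V, (∀ (m : M) (v : V), v ∈ W → ρ m v ∈ W) → W = ⊥ ∨ W = ⊤

/-- Equivalence (isomorphism) of representations. -/
def RepEquiv {M : Type*} [Monoid M] {V₁ V₂ : Type*}
    [AddCommGroup V₁] [Module ℂ V₁] [AddCommGroup V₂] [Module ℂ V₂]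
    (ρ₁ : Representation ℂ M V₁) (ρ₂ : Representation ℂ M V₂) : Prop :=
  ∃ e : V₁ ≃ₗ[ℂ] V₂, ∀ (m : M) (v : V₁), e (ρ₁ m v) = ρ₂ m (e v)

/-- Restriction of a representation of `G` to a subgroup `H`. -/
def resR (H : Subgroup G) {V : Type*} [AddCommGroup V] [Module ℂ V]
    (ρ : Representation ℂ G V) : Representation ℂ H V := ρ.comp H.subtype

@[simp] lemma resR_apply (H : Subgroup G) {V : Type*} [AddCommGroup V] [Module ℂ V]
    (ρ : Representation ℂ G V) (h : H) : resR H ρ h = ρ ↑h := rfl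

end Defs
section Ind

variable {G : Type u} [Group G] (H : Subgroup G)
variable {V : Type u} [AddCommGroup V] [Module ℂ V]

/-- The space of the induced representation: functions `w : G → V` with
`w (h * g) = ρ h (w g)` for `h ∈ H`. -/
def IndSpace (ρ : Representation ℂ H V) : Submodule ℂ (G → V) where
  carrier := {w | ∀ (h : H) (g : G), w (↑h * g) = ρ h (w g)}
  add_mem' := by intro a b ha hb h g; simp_all
  zero_mem' := by intro h g; simp
  smul_mem' := by intro c a ha h g; simp_all

/-- The induced representation `Ind_H^G ρ`, acting by right translation. -/
def indRep (ρ : Representation ℂ H V) : Representation ℂ G ↥(IndSpace H ρ) where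
  toFun g :=
    { toFun := fun w => ⟨fun x => (w : G → V) (x * g), by
        intro h x
        have := w.2 h (x * g)
        simpa [mul_assoc] using this⟩
      map_add' := by intro a b; apply Subtype.ext; funext x; simp
      map_smul' := by intro c a; apply Subtype.ext; funext x; simp }
  map_one' := by
    apply LinearMap.ext; intro w; apply Subtype.ext; funext x; simp
  map_mul' := by
    intro g₁ g₂
    apply LinearMap.ext; intro w; apply Subtype.ext; funext x
    simp [Module.End.mul_apply, mul_assoc]

@[simp] lemma indRep_apply (ρ : Representation ℂ H V) (g : G) (w : ↥(IndSpace H ρ)) (x : G) :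
    ((indRep H ρ g w : ↥(IndSpace H ρ)) : G → V) x = (w : G → V) (x * g) := rfl

/-- Evaluation at `g` of functions in the induced representation. -/
def evalAt (ρ : Representation ℂ H V) (g : G) : ↥(IndSpace H ρ) →ₗ[ℂ] V where
  toFun w := (w : G → V) g
  map_add' := by intro a b; simp
  map_smul' := by intro c a; simp

@[simp] lemma evalAt_apply (ρ : Representation ℂ H V) (g : G) (w : ↥(IndSpace H ρ)) :
    evalAt H ρ g w = (w : G → V) g := rfl

/-- Extension by zero: the section `e_g^*` of `evalAt`, supported on the coset `H g`. -/
def extAt [DecidablePred (· ∈ H)] (ρ : Representation ℂ H V) (g : G) :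
    V →ₗ[ℂ] ↥(IndSpace H ρ) where
  toFun v := ⟨fun x => if hx : x * g⁻¹ ∈ H then ρ ⟨x * g⁻¹, hx⟩ v else 0, by
    intro h x
    dsimp only
    by_cases hx : x * g⁻¹ ∈ H
    · have hx' : (↑h * x) * g⁻¹ ∈ H := by
        have e : (↑h * x) * g⁻¹ = ↑h * (x * g⁻¹) := by group
        rw [e]; exact H.mul_mem h.2 hx
      rw [dif_pos hx', dif_pos hx]
      have e2 : (⟨(↑h * x) * g⁻¹, hx'⟩ : H) = h * ⟨x * g⁻¹, hx⟩ := by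
        apply Subtype.ext; simp [mul_assoc]
      rw [e2, map_mul]
      rfl
    · have hx' : ¬ ((↑h * x) * g⁻¹ ∈ H) := by
        intro hc
        apply hx
        have e : x * g⁻¹ = (↑h)⁻¹ * ((↑h * x) * g⁻¹) := by group
        rw [e]; exact H.mul_mem (H.inv_mem h.2) hc
      rw [dif_neg hx', dif_neg hx, map_zero]⟩
  map_add' := by
    intro a b; apply Subtype.ext; funext x
    by_cases hx : x * g⁻¹ ∈ H <;> simp [hx]
  map_smul' := by
    intro c a; apply Subtype.ext; funext x
    by_cases hx : x * g⁻¹ ∈ H <;> simp [hx]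

/-- The projector `p_g = e_g^* ∘ e_g` onto functions supported on `H g`. -/
def projAt [DecidablePred (· ∈ H)] (ρ : Representation ℂ H V) (g : G) :
    ↥(IndSpace H ρ) →ₗ[ℂ] ↥(IndSpace H ρ) :=
  extAt H ρ g ∘ₗ evalAt H ρ g

/-- Functoriality of induction on `H`-equivariant maps. -/
def indMap {V₁ V₂ : Type u} [AddCommGroup V₁] [Module ℂ V₁] [AddCommGroup V₂] [Module ℂ V₂]
    (ρ₁ : Representation ℂ H V₁) (ρ₂ : Representation ℂ H V₂)
    (α : V₁ →ₗ[ℂ] V₂) (hα : ∀ (h : H) (v : V₁), α (ρ₁ h v) = ρ₂ h (α v)) :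
    ↥(IndSpace H ρ₁) →ₗ[ℂ] ↥(IndSpace H ρ₂) where
  toFun w := ⟨fun x => α ((w : G → V₁) x), by
    intro h x
    dsimp only
    rw [w.2 h x, hα]⟩
  map_add' := by intro a b; apply Subtype.ext; funext x; simp
  map_smul' := by intro c a; apply Subtype.ext; funext x; simp

/-- Conjugate representation `π^g`, given by `h ↦ π (g⁻¹ h g)`. -/
def conjRep [hN : H.Normal] (ρ : Representation ℂ H V) (g : G) : Representation ℂ H V :=
  ρ.comp
    { toFun := fun h => ⟨g⁻¹ * ↑h * g, by simpa using hN.conj_mem ↑h h.2 g⁻¹⟩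
      map_one' := by apply Subtype.ext; simp
      map_mul' := by
        intro a b; apply Subtype.ext
        show g⁻¹ * ↑(a * b) * g = (g⁻¹ * ↑a * g) * (g⁻¹ * ↑b * g)
        rw [Subgroup.coe_mul]; group }

@[simp] lemma conjRep_apply [H.Normal] (ρ : Representation ℂ H V) (g : G) (h : H) (v : V) :
    conjRep H ρ g h v = ρ ⟨g⁻¹ * ↑h * g, by simpa using ‹H.Normal›.conj_mem ↑h h.2 g⁻¹⟩ v := rfl

attribute [irreducible] indRep

end Ind
section Bundled

/-- A bundled (complex, linear) representation of a group `M`. -/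
structure RepOn (M : Type u) [Group M] : Type (u + 1) where
  V : Type u
  [acg : AddCommGroup V]
  [mod : Module ℂ V]
  ρ : Representation ℂ M V

attribute [instance] RepOn.acg RepOn.mod

variable {G : Type u} [Group G]

/-- The bundled induced representation. -/
def indRepOn (H : Subgroup G) (σ : RepOn ↥H) : RepOn G :=
  { V := ↥(IndSpace H σ.ρ), ρ := indRep H σ.ρ }

/-- The bundled restriction to a subgroup. -/
def resRepOn (H : Subgroup G) (P : RepOn G) : RepOn ↥H :=
  { V := P.V, ρ := resR H P.ρ }

/-- The bundled twist by a character trivial on `H`. -/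
def twistRepOn {H : Subgroup G} (P : RepOn G) (χ : TrivOn H) : RepOn G :=
  { V := P.V, ρ := twist P.ρ χ.1 }

/-- A family of endomorphisms (one for each bundled representation) commuting with all
intertwiners between members of `C`: an endomorphism of the forgetful functor on `C`. -/
def Commutes {M : Type u} [Group M] (C : Set (RepOn M))
    (φ : ∀ π : RepOn M, π.V →ₗ[ℂ] π.V) : Prop :=
  ∀ π₁ ∈ C, ∀ π₂ ∈ C, ∀ α : π₁.V →ₗ[ℂ] π₂.V,
    (∀ m : M, α ∘ₗ π₁.ρ m = π₂.ρ m ∘ₗ α) → α ∘ₗ φ π₁ = φ π₂ ∘ₗ α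

/-- Commutation with all `H`-intertwiners between members of `C` (support in `H`). -/
def HCommutes (H : Subgroup G) (C : Set (RepOn G))
    (φ : ∀ π : RepOn G, π.V →ₗ[ℂ] π.V) : Prop :=
  ∀ π₁ ∈ C, ∀ π₂ ∈ C, ∀ α : π₁.V →ₗ[ℂ] π₂.V,
    (∀ h : H, α ∘ₗ π₁.ρ ↑h = π₂.ρ ↑h ∘ₗ α) → α ∘ₗ φ π₁ = φ π₂ ∘ₗ α

/-- The direct sum of a family of bundled representations. -/
def dsumRepOn {M : Type u} [Group M] {ι : Type u} [DecidableEq ι] (f : ι → RepOn M) :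
    RepOn M where
  V := ⨁ i, (f i).V
  ρ :=
    { toFun := fun m => DFinsupp.mapRange.linearMap (fun i => (f i).ρ m)
      map_one' := by
        have : (fun i => (f i).ρ (1 : M)) = fun i => (LinearMap.id : (f i).V →ₗ[ℂ] (f i).V) := by
          funext i; rw [map_one]; rfl
        try dsimp only
        rw [this, DFinsupp.mapRange.linearMap_id]
        rfl
      map_mul' := by
        intro m₁ m₂
        have : (fun i => (f i).ρ (m₁ * m₂)) =
            fun i => ((f i).ρ m₁) ∘ₗ ((f i).ρ m₂) := by
          funext i; rw [map_mul]; rfl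
        try dsimp only
        rw [this, DFinsupp.mapRange.linearMap_comp]
        rfl }

/-- Closure of a class of representations under subobjects, quotients and direct sums. -/
def ClosedRep {M : Type u} [Group M] (C : Set (RepOn M)) : Prop :=
  (∀ P ∈ C, ∀ σ : RepOn M, (∃ f : σ.V →ₗ[ℂ] P.V, Function.Injective f ∧
      ∀ (m : M) (v : σ.V), f (σ.ρ m v) = P.ρ m (f v)) → σ ∈ C) ∧
  (∀ P ∈ C, ∀ σ : RepOn M, (∃ f : P.V →ₗ[ℂ] σ.V, Function.Surjective f ∧
      ∀ (m : M) (v : P.V), f (P.ρ m v) = σ.ρ m (f v)) → σ ∈ C) ∧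
  (∀ (ι : Type u) (_ : DecidableEq ι) (f : ι → RepOn M),
      (∀ i, f i ∈ C) → dsumRepOn f ∈ C)

/-- The Fourier transform of a finitely supported function at a representation. -/
def fourierT {M : Type u} [Group M] (f : M →₀ ℂ) {V : Type*} [AddCommGroup V] [Module ℂ V]
    (ρ : Representation ℂ M V) : V →ₗ[ℂ] V :=
  f.sum fun g c => c • (ρ g : V →ₗ[ℂ] V)

end Bundled

section Statement1Proof

namespace Stmt1

open Submodule

variable {G : Type u} [Group G] {H : Subgroup G}
variable {V : Type u} [AddCommGroup V] [Module ℂ V]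

/-- `H`-stability of a submodule under a representation of `G`. -/
def HStab (H : Subgroup G) (P : Representation ℂ G V) (W : Submodule ℂ V) : Prop :=
  ∀ g ∈ H, ∀ v ∈ W, P g v ∈ W

variable {P : Representation ℂ G V}

lemma P_mul_apply (a b : G) (v : V) : P (a * b) v = P a (P b v) := by
  rw [map_mul]; rfl

lemma P_one_apply (v : V) : P (1 : G) v = v := by
  rw [map_one]; rfl

lemma P_inv_cancel (g : G) (v : V) : P g⁻¹ (P g v) = v := by
  rw [← P_mul_apply, inv_mul_cancel, P_one_apply]

lemma P_apply_inv_cancel (g : G) (v : V) : P g (P g⁻¹ v) = v := by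
  rw [← P_mul_apply, mul_inv_cancel, P_one_apply]

lemma map_P_mul (W : Submodule ℂ V) (a b : G) :
    W.map (P (a * b)) = (W.map (P b)).map (P a) := by
  rw [map_mul, Module.End.mul_eq_comp, Submodule.map_comp]

lemma map_P_one (W : Submodule ℂ V) : W.map (P (1 : G)) = W := by
  rw [map_one, Module.End.one_eq_id, Submodule.map_id]

lemma map_P_map_P_inv (W : Submodule ℂ V) (g : G) : (W.map (P g)).map (P g⁻¹) = W := by
  rw [← map_P_mul, inv_mul_cancel, map_P_one]

lemma map_P_inv_map_P (W : Submodule ℂ V) (g : G) : (W.map (P g⁻¹)).map (P g) = W := by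
  have h := map_P_map_P_inv (P := P) W g⁻¹
  rwa [inv_inv] at h

lemma map_P_lt_map_P {W W' : Submodule ℂ V} (g : G) (h : W < W') :
    W.map (P g) < W'.map (P g) := by
  refine lt_of_le_of_ne (Submodule.map_mono h.le) (fun hEq => h.ne ?_)
  have h2 := congrArg (Submodule.map (P g⁻¹)) hEq
  simpa [map_P_map_P_inv] using h2

lemma P_surjective (g : G) : Function.Surjective (P g) :=
  fun v => ⟨P g⁻¹ v, P_apply_inv_cancel g v⟩

lemma hstab_bot : HStab H P ⊥ := by
  intro g hg v hv
  rw [Submodule.mem_bot] at hv ⊢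
  rw [hv, map_zero]

lemma hstab_top : HStab H P ⊤ := fun _ _ _ _ => trivial

lemma HStab.inf {W₁ W₂ : Submodule ℂ V} (h₁ : HStab H P W₁) (h₂ : HStab H P W₂) :
    HStab H P (W₁ ⊓ W₂) := by
  intro g hg v hv
  rw [Submodule.mem_inf] at hv ⊢
  exact ⟨h₁ g hg v hv.1, h₂ g hg v hv.2⟩

lemma HStab.sup {W₁ W₂ : Submodule ℂ V} (h₁ : HStab H P W₁) (h₂ : HStab H P W₂) :
    HStab H P (W₁ ⊔ W₂) := by
  intro g hg v hv
  rcases Submodule.mem_sup.1 hv with ⟨a, ha, b, hb, rfl⟩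
  rw [map_add]
  exact Submodule.add_mem_sup (h₁ g hg a ha) (h₂ g hg b hb)

lemma hstab_finsetInf {ι : Type*} (t : Finset ι) (f : ι → Submodule ℂ V)
    (hf : ∀ i, HStab H P (f i)) : HStab H P (t.inf f) := by
  intro g hg v hv
  simp only [Finset.inf_eq_iInf, Submodule.mem_iInf] at hv ⊢
  exact fun i hi => hf i g hg v (hv i hi)

lemma HStab.map_P_eq {W : Submodule ℂ V} (hW : HStab H P W) {h : G} (hh : h ∈ H) :
    W.map (P h) = W := by
  apply le_antisymm
  · rintro v ⟨w, hw, rfl⟩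
    exact hW h hh w hw
  · intro w hw
    exact ⟨P h⁻¹ w, hW h⁻¹ (H.inv_mem hh) w hw, P_apply_inv_cancel h w⟩

variable [H.Normal]

lemma HStab.map_P {W : Submodule ℂ V} (hW : HStab H P W) (g : G) :
    HStab H P (W.map (P g)) := by
  intro h hh v hv
  rcases hv with ⟨w, hw, rfl⟩
  have hmem : g⁻¹ * h * g ∈ H := by
    simpa using Subgroup.Normal.conj_mem ‹H.Normal› h hh g⁻¹
  refine ⟨P (g⁻¹ * h * g) w, hW _ hmem w hw, ?_⟩
  rw [← P_mul_apply, ← P_mul_apply]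
  rw [show g * (g⁻¹ * h * g) = h * g by group]

/-- Existence of a maximal proper `H`-stable submodule. -/
lemma exists_hstab_coatom [Finite (G ⧸ H)] (hirr : IsIrreducibleRep P) :
    ∃ K : Submodule ℂ V, HStab H P K ∧ K ≠ ⊤ ∧
      ∀ W, HStab H P W → K < W → W = ⊤ := by
  classical
  obtain ⟨v₀, hv₀⟩ := hirr.1
  haveI : Fintype (G ⧸ H) := Fintype.ofFinite _
  have gen_top : ∀ W : Submodule ℂ V, HStab H P W →
      (∀ x : G ⧸ H, P x.out v₀ ∈ W) → W = ⊤ := by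
    intro W hW hall
    have hUinv : ∀ (g : G) (v : V),
        v ∈ Submodule.span ℂ (Set.range fun g : G => P g v₀) →
        P g v ∈ Submodule.span ℂ (Set.range fun g : G => P g v₀) := by
      intro g v hv
      have hle : (Submodule.span ℂ (Set.range fun g : G => P g v₀)).map (P g)
          ≤ Submodule.span ℂ (Set.range fun g : G => P g v₀) := by
        rw [Submodule.map_span]
        apply Submodule.span_le.2
        rintro _ ⟨_, ⟨a, rfl⟩, rfl⟩
        exact Submodule.subset_span ⟨g * a, P_mul_apply g a v₀⟩
      exact hle (Submodule.mem_map_of_mem hv)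
    have hUbot : Submodule.span ℂ (Set.range fun g : G => P g v₀) ≠ ⊥ := by
      intro hb
      apply hv₀
      have h1 : P (1 : G) v₀ ∈ Submodule.span ℂ (Set.range fun g : G => P g v₀) :=
        Submodule.subset_span ⟨1, rfl⟩
      rw [hb, P_one_apply] at h1
      simpa using h1
    have hUtop := (hirr.2 _ hUinv).resolve_left hUbot
    rw [eq_top_iff, ← hUtop]
    apply Submodule.span_le.2
    rintro _ ⟨a, rfl⟩
    show P a v₀ ∈ W
    have h1 : ((QuotientGroup.mk a : G ⧸ H)).out⁻¹ * a ∈ H := by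
      rw [← QuotientGroup.eq]
      exact QuotientGroup.out_eq' _
    have hmem : a * ((QuotientGroup.mk a : G ⧸ H)).out⁻¹ ∈ H := by
      have h2 := Subgroup.Normal.conj_mem ‹H.Normal› _ h1 a
      have h3 : a * (((QuotientGroup.mk a : G ⧸ H)).out⁻¹ * a) * a⁻¹
          = a * ((QuotientGroup.mk a : G ⧸ H)).out⁻¹ := by group
      rwa [h3] at h2
    have key : P a v₀ = P (a * ((QuotientGroup.mk a : G ⧸ H)).out⁻¹)
        (P ((QuotientGroup.mk a : G ⧸ H)).out v₀) := by
      rw [← P_mul_apply]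
      rw [show a * ((QuotientGroup.mk a : G ⧸ H)).out⁻¹ * ((QuotientGroup.mk a : G ⧸ H)).out
        = a by group]
    rw [key]
    exact hW _ hmem _ (hall _)
  set s : Set (Submodule ℂ V) := {W | HStab H P W ∧ W ≠ ⊤} with hs
  have hbot_mem : (⊥ : Submodule ℂ V) ∈ s := by
    refine ⟨hstab_bot, fun hb => ?_⟩
    apply hv₀
    have : v₀ ∈ (⊥ : Submodule ℂ V) := by rw [hb]; trivial
    simpa using this
  have hchainCond : ∀ c ⊆ s, IsChain (· ≤ ·) c → ∀ y ∈ c, ∃ ub ∈ s, ∀ z ∈ c, z ≤ ub := by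
    intro c hcs hchain y hy
    haveI : Nonempty c := ⟨⟨y, hy⟩⟩
    have hdir : Directed (· ≤ ·) (fun W : c => (W : Submodule ℂ V)) :=
      hchain.directedOn.directed_val
    refine ⟨⨆ W : c, (W : Submodule ℂ V), ⟨?_, ?_⟩, ?_⟩
    · intro g hg v hv
      rcases (Submodule.mem_iSup_of_directed _ hdir).1 hv with ⟨W, hW⟩
      exact (Submodule.mem_iSup_of_directed _ hdir).2 ⟨W, (hcs W.2).1 g hg v hW⟩
    · intro htop
      have hall : ∀ x : G ⧸ H, ∃ W : c, P x.out v₀ ∈ (W : Submodule ℂ V) := by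
        intro x
        have : P x.out v₀ ∈ ⨆ W : c, (W : Submodule ℂ V) := by rw [htop]; trivial
        exact (Submodule.mem_iSup_of_directed _ hdir).1 this
      choose f hf using hall
      obtain ⟨z, hz⟩ := hdir.finset_le (Finset.univ.image f)
      have hzall : ∀ x : G ⧸ H, P x.out v₀ ∈ (z : Submodule ℂ V) := fun x =>
        hz (f x) (Finset.mem_image_of_mem f (Finset.mem_univ x)) (hf x)
      exact (hcs z.2).2 (gen_top _ (hcs z.2).1 hzall)
    · intro w hw
      exact le_iSup (fun W : c => (W : Submodule ℂ V)) ⟨w, hw⟩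
  obtain ⟨K, -, hKmax⟩ := zorn_le_nonempty₀ s hchainCond ⊥ hbot_mem
  refine ⟨K, hKmax.1.1, hKmax.1.2, ?_⟩
  intro W hW hKW
  by_contra hWtop
  exact hKW.2 (hKmax.2 ⟨hW, hWtop⟩ hKW.1)

/-- Every nonzero `H`-stable submodule contains an `H`-stable simple submodule. -/
lemma exists_simple_le [Finite (G ⧸ H)] (hirr : IsIrreducibleRep P)
    {U : Submodule ℂ V} (hU : HStab H P U) (hUne : U ≠ ⊥) :
    ∃ J : Submodule ℂ V, HStab H P J ∧ J ≠ ⊥ ∧ J ≤ U ∧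
      ∀ W, HStab H P W → W ≤ J → W = ⊥ ∨ W = J := by
  classical
  haveI : Fintype (G ⧸ H) := Fintype.ofFinite _
  obtain ⟨K, hKs, hKne, hKco⟩ := exists_hstab_coatom (H := H) hirr
  set Kf : G ⧸ H → Submodule ℂ V := fun x => K.map (P x.out) with hKf
  have hKfs : ∀ x, HStab H P (Kf x) := fun x => hKs.map_P _
  have hcoset : ∀ a b : G, (QuotientGroup.mk a : G ⧸ H) = QuotientGroup.mk b →
      K.map (P a) = K.map (P b) := by
    intro a b hab
    have h1 : a⁻¹ * b ∈ H := QuotientGroup.eq.1 hab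
    have h2 : K.map (P (a * (a⁻¹ * b))) = K.map (P b) := by
      rw [show a * (a⁻¹ * b) = b by group]
    rw [map_P_mul, hKs.map_P_eq h1] at h2
    exact h2
  have hKfco : ∀ x W, HStab H P W → Kf x < W → W = ⊤ := by
    intro x W hW hlt
    have h1 : K < W.map (P x.out⁻¹) := by
      have h2 := map_P_lt_map_P (P := P) x.out⁻¹ hlt
      rwa [hKf, map_P_map_P_inv] at h2
    have h2 := hKco _ (hW.map_P _) h1
    have h3 : (W.map (P x.out⁻¹)).map (P x.out) = W := map_P_inv_map_P W x.out
    rw [← h3, h2, Submodule.map_top, LinearMap.range_eq_top.2 (P_surjective x.out)]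
  have hinf : (⨅ x : G ⧸ H, Kf x) = ⊥ := by
    have hGinv : ∀ (g : G) (v : V), v ∈ (⨅ x : G ⧸ H, Kf x) →
        P g v ∈ ⨅ x : G ⧸ H, Kf x := by
      intro g v hv
      rw [Submodule.mem_iInf] at hv ⊢
      intro x
      have hvy := hv (QuotientGroup.mk (g⁻¹ * x.out))
      have h2 : K.map (P ((QuotientGroup.mk (g⁻¹ * x.out) : G ⧸ H)).out)
          = K.map (P (g⁻¹ * x.out)) := hcoset _ _ (QuotientGroup.out_eq' _)
      rw [hKf] at hvy
      simp only at hvy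
      rw [h2] at hvy
      have h3 : P g v ∈ (K.map (P (g⁻¹ * x.out))).map (P g) :=
        Submodule.mem_map_of_mem hvy
      rw [← map_P_mul, show g * (g⁻¹ * x.out) = x.out by group] at h3
      exact h3
    have h1 : ((QuotientGroup.mk (1 : G) : G ⧸ H)).out ∈ H := by
      have h2 := QuotientGroup.eq.1 (QuotientGroup.out_eq' (QuotientGroup.mk (1 : G) : G ⧸ H))
      simpa using H.inv_mem h2
    have hle : (⨅ x : G ⧸ H, Kf x) ≤ K := by
      refine le_trans (iInf_le _ (QuotientGroup.mk (1 : G))) ?_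
      exact le_of_eq (hKs.map_P_eq h1)
    have hne : (⨅ x : G ⧸ H, Kf x) ≠ ⊤ := by
      intro h
      exact hKne (top_le_iff.1 (h ▸ hle))
    exact (hirr.2 _ hGinv).resolve_right hne
  have main : ∀ (n : ℕ) (t : Finset (G ⧸ H)) (U' : Submodule ℂ V), t.card = n →
      HStab H P U' → U' ≠ ⊥ → U' ⊓ t.inf Kf = ⊥ →
      ∃ J, HStab H P J ∧ J ≠ ⊥ ∧ J ≤ U' ∧
        ∀ W, HStab H P W → W ≤ J → W = ⊥ ∨ W = J := by
    intro n
    induction n with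
    | zero =>
      intro t U' ht hU' hU'ne hinf0
      rw [Finset.card_eq_zero.1 ht] at hinf0
      simp only [Finset.inf_empty, inf_top_eq] at hinf0
      exact absurd hinf0 hU'ne
    | succ n ih =>
      intro t U' ht hU' hU'ne hinf0
      have htne : t.Nonempty := Finset.card_pos.1 (by omega)
      obtain ⟨a, ha⟩ := htne
      have hTinf : t.inf Kf = Kf a ⊓ (t.erase a).inf Kf := by
        conv_lhs => rw [← Finset.insert_erase ha]
        rw [Finset.inf_insert]
      by_cases hJ : U' ⊓ (t.erase a).inf Kf = ⊥
      · exact ih (t.erase a) U' (by rw [Finset.card_erase_of_mem ha, ht]; omega) hU' hU'ne hJ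
      · refine ⟨U' ⊓ (t.erase a).inf Kf, hU'.inf (hstab_finsetInf _ _ hKfs), hJ,
          inf_le_left, ?_⟩
        intro W hW hWle
        by_cases hWbot : W = ⊥
        · exact Or.inl hWbot
        right
        have hKJ : Kf a ⊓ (U' ⊓ (t.erase a).inf Kf) = ⊥ := by
          rw [inf_left_comm, ← hTinf]
          exact hinf0
        have hWKa : W ⊓ Kf a = ⊥ := by
          have h1 : W ⊓ Kf a ≤ Kf a ⊓ (U' ⊓ (t.erase a).inf Kf) := by
            rw [inf_comm W (Kf a)]
            exact inf_le_inf_left _ hWle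
          rw [hKJ] at h1
          exact le_bot_iff.1 h1
        have hlt : Kf a < W ⊔ Kf a := by
          rcases lt_or_eq_of_le (le_sup_right : Kf a ≤ W ⊔ Kf a) with h | h
          · exact h
          · exfalso
            apply hWbot
            have hWle' : W ≤ Kf a := by rw [h]; exact le_sup_left
            calc W = W ⊓ Kf a := (inf_eq_left.2 hWle').symm
              _ = ⊥ := hWKa
        have htop := hKfco a _ (hW.sup (hKfs a)) hlt
        have hmod := sup_inf_assoc_of_le (Kf a)
          (hWle : W ≤ U' ⊓ (t.erase a).inf Kf)
        rw [htop, top_inf_eq, hKJ, sup_bot_eq] at hmod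
        exact hmod.symm
  have h0 : Finset.univ.inf Kf = ⊥ :=
    le_bot_iff.1 (hinf ▸ le_iInf fun x => Finset.inf_le (Finset.mem_univ x))
  exact main _ Finset.univ U rfl hU hUne (by rw [h0, inf_bot_eq])

/-- Every `H`-stable submodule has an `H`-stable complement. -/
lemma exists_hstab_compl [Finite (G ⧸ H)] (hirr : IsIrreducibleRep P)
    {W : Submodule ℂ V} (hW : HStab H P W) :
    ∃ C, HStab H P C ∧ W ⊓ C = ⊥ ∧ W ⊔ C = ⊤ := by
  classical
  set s : Set (Submodule ℂ V) := {C | HStab H P C ∧ W ⊓ C = ⊥} with hs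
  have hbot : (⊥ : Submodule ℂ V) ∈ s := ⟨hstab_bot, inf_bot_eq W⟩
  have hchainCond : ∀ c ⊆ s, IsChain (· ≤ ·) c → ∀ y ∈ c, ∃ ub ∈ s, ∀ z ∈ c, z ≤ ub := by
    intro c hcs hchain y hy
    haveI : Nonempty c := ⟨⟨y, hy⟩⟩
    have hdir : Directed (· ≤ ·) (fun Z : c => (Z : Submodule ℂ V)) :=
      hchain.directedOn.directed_val
    refine ⟨⨆ Z : c, (Z : Submodule ℂ V), ⟨?_, ?_⟩, ?_⟩
    · intro g hg v hv
      rcases (Submodule.mem_iSup_of_directed _ hdir).1 hv with ⟨Z, hZ⟩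
      exact (Submodule.mem_iSup_of_directed _ hdir).2 ⟨Z, (hcs Z.2).1 g hg v hZ⟩
    · rw [eq_bot_iff]
      intro v hv
      rw [Submodule.mem_inf] at hv
      rcases (Submodule.mem_iSup_of_directed _ hdir).1 hv.2 with ⟨Z, hZ⟩
      have hvb : v ∈ W ⊓ (Z : Submodule ℂ V) := Submodule.mem_inf.2 ⟨hv.1, hZ⟩
      rw [(hcs Z.2).2] at hvb
      exact hvb
    · intro z hz
      exact le_iSup (fun Z : c => (Z : Submodule ℂ V)) ⟨z, hz⟩
  obtain ⟨C, -, hCmax⟩ := zorn_le_nonempty₀ s hchainCond ⊥ hbot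
  set 𝒮 : Set (Submodule ℂ V) := {S | HStab H P S ∧ S ≠ ⊥ ∧
    ∀ W', HStab H P W' → W' ≤ S → W' = ⊥ ∨ W' = S} with h𝒮
  have hmap : ∀ (g : G) (S : Submodule ℂ V), S ∈ 𝒮 → S.map (P g) ∈ 𝒮 := by
    intro g S hS
    refine ⟨hS.1.map_P g, ?_, ?_⟩
    · intro hb
      apply hS.2.1
      have h1 := congrArg (Submodule.map (P g⁻¹)) hb
      rwa [map_P_map_P_inv, Submodule.map_bot] at h1
    · intro W' hW' hle
      have hle' : W'.map (P g⁻¹) ≤ S := by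
        have h1 := Submodule.map_mono (f := P g⁻¹) hle
        rwa [map_P_map_P_inv] at h1
      rcases hS.2.2 _ (hW'.map_P g⁻¹) hle' with h | h
      · left
        have h1 := congrArg (Submodule.map (P g)) h
        rwa [map_P_inv_map_P, Submodule.map_bot] at h1
      · right
        have h1 := congrArg (Submodule.map (P g)) h
        rwa [map_P_inv_map_P] at h1
  have htopne : (⊤ : Submodule ℂ V) ≠ ⊥ := by
    obtain ⟨v₀, hv₀⟩ := hirr.1
    intro h
    apply hv₀
    have : v₀ ∈ (⊥ : Submodule ℂ V) := by rw [← h]; trivial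
    simpa using this
  have hsoc_top : sSup 𝒮 = ⊤ := by
    have hGinv : ∀ (g : G) (v : V), v ∈ sSup 𝒮 → P g v ∈ sSup 𝒮 := by
      intro g v hv
      have h1 : (sSup 𝒮).map (P g) ≤ sSup 𝒮 := by
        have h2 : (sSup 𝒮).map (P g) = ⨆ S : 𝒮, (S : Submodule ℂ V).map (P g) := by
          rw [sSup_eq_iSup', Submodule.map_iSup]
        rw [h2]
        exact iSup_le fun S => le_sSup (hmap g S S.2)
      exact h1 (Submodule.mem_map_of_mem hv)
    have hne : sSup 𝒮 ≠ ⊥ := by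
      obtain ⟨J, hJs, hJne, -, hJsimp⟩ := exists_simple_le (H := H) hirr hstab_top htopne
      intro hb
      exact hJne (le_bot_iff.1 (hb ▸ le_sSup (show J ∈ 𝒮 from ⟨hJs, hJne, hJsimp⟩)))
    exact (hirr.2 _ hGinv).resolve_left hne
  have hcod : W ⊔ C = ⊤ := by
    refine le_antisymm le_top ?_
    rw [← hsoc_top]
    refine sSup_le ?_
    intro S hS
    by_contra hSle
    have h0 : S ⊓ (W ⊔ C) = ⊥ := by
      rcases hS.2.2 (S ⊓ (W ⊔ C)) (hS.1.inf (hW.sup hCmax.1.1)) inf_le_left with h | h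
      · exact h
      · exfalso
        apply hSle
        rw [← h]
        exact inf_le_right
    have hCS : (C ⊔ S) ∈ s := by
      refine ⟨hCmax.1.1.sup hS.1, ?_⟩
      rw [eq_bot_iff]
      intro v hv
      rw [Submodule.mem_inf] at hv
      obtain ⟨hvW, hvCS⟩ := hv
      rcases Submodule.mem_sup.1 hvCS with ⟨cc, hcc, ss, hss, rfl⟩
      have hssmem : ss ∈ S ⊓ (W ⊔ C) := by
        refine Submodule.mem_inf.2 ⟨hss, ?_⟩
        have h1 : ss = (cc + ss) - cc := by abel
        rw [h1]
        exact Submodule.sub_mem _ (Submodule.mem_sup_left hvW) (Submodule.mem_sup_right hcc)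
      rw [h0] at hssmem
      have hss0 : ss = 0 := (Submodule.mem_bot ℂ).1 hssmem
      have h5 : cc + ss ∈ C := by rw [hss0, add_zero]; exact hcc
      have h6 : cc + ss ∈ W ⊓ C := Submodule.mem_inf.2 ⟨hvW, h5⟩
      rw [hCmax.1.2] at h6
      exact h6
    have h7 := hCmax.2 hCS le_sup_left
    exact hSle (le_trans (le_trans le_sup_right h7) le_sup_right)
  exact ⟨C, hCmax.1.1, hCmax.1.2, hcod⟩

/-- Kernel of a nonzero intertwiner out of an irreducible representation is trivial. -/
lemma ker_hom_eq_bot {M A B : Type*} [Monoid M] [AddCommGroup A] [Module ℂ A]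
    [AddCommGroup B] [Module ℂ B] {ρ₁ : Representation ℂ M A} {ρ₂ : Representation ℂ M B}
    (h : IsIrreducibleRep ρ₁) {f : A →ₗ[ℂ] B}
    (hf : ∀ m v, f (ρ₁ m v) = ρ₂ m (f v)) (hf0 : f ≠ 0) : LinearMap.ker f = ⊥ := by
  have hinv : ∀ (m : M) v, v ∈ LinearMap.ker f → ρ₁ m v ∈ LinearMap.ker f := by
    intro m v hv
    rw [LinearMap.mem_ker] at hv ⊢
    rw [hf, hv, map_zero]
  rcases h.2 _ hinv with hk | hk
  · exact hk
  · exact absurd (LinearMap.ker_eq_top.1 hk) hf0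

/-- Range of a nonzero intertwiner into an irreducible representation is everything. -/
lemma range_hom_eq_top {M A B : Type*} [Monoid M] [AddCommGroup A] [Module ℂ A]
    [AddCommGroup B] [Module ℂ B] {ρ₁ : Representation ℂ M A} {ρ₂ : Representation ℂ M B}
    (h : IsIrreducibleRep ρ₂) {f : A →ₗ[ℂ] B}
    (hf : ∀ m v, f (ρ₁ m v) = ρ₂ m (f v)) (hf0 : f ≠ 0) : LinearMap.range f = ⊤ := by
  have hinv : ∀ (m : M) w, w ∈ LinearMap.range f → ρ₂ m w ∈ LinearMap.range f := by
    rintro m w ⟨v, rfl⟩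
    exact ⟨ρ₁ m v, hf m v⟩
  rcases h.2 _ hinv with hk | hk
  · exact absurd (LinearMap.range_eq_bot.1 hk) hf0
  · exact hk

/-- The subrepresentation of `H` on an `H`-stable submodule. -/
def subRepr (H : Subgroup G) (P : Representation ℂ G V) (W : Submodule ℂ V)
    (hW : HStab H P W) : Representation ℂ ↥H ↥W where
  toFun m := LinearMap.restrict (P ↑m) (fun v hv => hW ↑m m.2 v hv)
  map_one' := by
    apply LinearMap.ext; intro v; apply Subtype.ext
    simp [LinearMap.restrict_apply]
  map_mul' := fun m₁ m₂ => by
    apply LinearMap.ext; intro v; apply Subtype.ext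
    simp [LinearMap.restrict_apply, Module.End.mul_apply, P_mul_apply]

@[simp] lemma subRepr_apply (H : Subgroup G) (P : Representation ℂ G V) (W : Submodule ℂ V)
    (hW : HStab H P W) (m : ↥H) (v : ↥W) :
    (subRepr H P W hW m v : V) = P ↑m ↑v := rfl

/-- From a common irreducible constituent, get a nonzero `H`-intertwiner between the two
restrictions. -/
lemma exists_hom_of_common [Finite (G ⧸ H)]
    {V₁ V₂ : Type u} [AddCommGroup V₁] [Module ℂ V₁] [AddCommGroup V₂] [Module ℂ V₂]
    {P₁ : Representation ℂ G V₁} {P₂ : Representation ℂ G V₂}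
    (h₁ : IsIrreducibleRep P₁)
    (σ : RepOn ↥H) (hσ : IsIrreducibleRep σ.ρ)
    (f₁ : σ.V →ₗ[ℂ] V₁) (hf₁ : ∀ (m : ↥H) v, f₁ (σ.ρ m v) = P₁ ↑m (f₁ v)) (hf₁0 : f₁ ≠ 0)
    (f₂ : σ.V →ₗ[ℂ] V₂) (hf₂ : ∀ (m : ↥H) v, f₂ (σ.ρ m v) = P₂ ↑m (f₂ v)) (hf₂0 : f₂ ≠ 0) :
    ∃ e : V₁ →ₗ[ℂ] V₂, e ≠ 0 ∧ ∀ g ∈ H, ∀ v, e (P₁ g v) = P₂ g (e v) := by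
  classical
  have hinj₁ : Function.Injective f₁ :=
    LinearMap.ker_eq_bot.1 (ker_hom_eq_bot hσ (ρ₂ := resR H P₁) hf₁ hf₁0)
  have hinj₂ : Function.Injective f₂ :=
    LinearMap.ker_eq_bot.1 (ker_hom_eq_bot hσ (ρ₂ := resR H P₂) hf₂ hf₂0)
  have hWr : HStab H P₁ (LinearMap.range f₁) := by
    rintro g hg v ⟨u, rfl⟩
    refine ⟨σ.ρ ⟨g, hg⟩ u, ?_⟩
    simpa using hf₁ ⟨g, hg⟩ u
  obtain ⟨C, hC, hWC, hWCsup⟩ := exists_hstab_compl h₁ hWr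
  have hcompl : IsCompl (LinearMap.range f₁) C :=
    ⟨disjoint_iff.2 hWC, codisjoint_iff.2 hWCsup⟩
  set q := Submodule.projectionOnto _ C hcompl with hq
  have hπ : ∀ g ∈ H, ∀ v, ((q (P₁ g v) : V₁)) = P₁ g (q v : V₁) := by
    intro g hg v
    have hd : v = (q v : V₁) + (v - (q v : V₁)) := by abel
    have hmem2 : v - (q v : V₁) ∈ C := by
      rw [← Submodule.projectionOnto_apply_eq_zero_iff hcompl, map_sub,
        Submodule.projectionOnto_apply_left hcompl (q v)]
      exact sub_self _
    have e1 : P₁ g v = P₁ g (q v : V₁) + P₁ g (v - (q v : V₁)) := by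
      rw [← map_add, ← hd]
    have hmem1 : P₁ g (q v : V₁) ∈ LinearMap.range f₁ := hWr g hg _ (q v).2
    have hmem2' : P₁ g (v - (q v : V₁)) ∈ C := hC g hg _ hmem2
    have e2 : q (P₁ g (q v : V₁)) = ⟨P₁ g (q v : V₁), hmem1⟩ :=
      Submodule.projectionOnto_apply_left hcompl ⟨P₁ g (q v : V₁), hmem1⟩
    rw [e1, map_add, e2, (Submodule.projectionOnto_apply_of_mem_right hcompl hmem2' :
        q (P₁ g (v - (q v : V₁))) = 0),
      add_zero]
  set eqW : σ.V ≃ₗ[ℂ] ↥(LinearMap.range f₁) := LinearEquiv.ofInjective f₁ hinj₁ with heqW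
  have hkey : ∀ w : ↥(LinearMap.range f₁), f₁ (eqW.symm w) = ↑w := by
    intro w
    have h1 : eqW (eqW.symm w) = w := eqW.apply_symm_apply w
    have h2 : (eqW (eqW.symm w) : V₁) = f₁ (eqW.symm w) :=
      LinearEquiv.ofInjective_apply f₁ (eqW.symm w)
    rw [← h2, h1]
  refine ⟨f₂ ∘ₗ (eqW.symm.toLinearMap ∘ₗ q), ?_, ?_⟩
  · obtain ⟨u₀, hu₀⟩ := hσ.1
    intro h0
    have h6 : q (f₁ u₀) = ⟨f₁ u₀, ⟨u₀, rfl⟩⟩ :=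
      Submodule.projectionOnto_apply_left hcompl ⟨f₁ u₀, ⟨u₀, rfl⟩⟩
    have h7 : eqW.symm (q (f₁ u₀)) = u₀ := by
      apply hinj₁
      rw [hkey, h6]
    have h8 : (f₂ ∘ₗ (eqW.symm.toLinearMap ∘ₗ q)) (f₁ u₀) = f₂ u₀ := by
      simp only [LinearMap.coe_comp, Function.comp_apply, LinearEquiv.coe_coe]
      rw [h7]
    rw [h0] at h8
    apply hu₀
    apply hinj₂
    rw [map_zero]
    exact h8.symm ▸ (by simp)
  · intro g hg v
    have hs : eqW.symm (q (P₁ g v)) = σ.ρ ⟨g, hg⟩ (eqW.symm (q v)) := by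
      apply hinj₁
      rw [hkey, hf₁ ⟨g, hg⟩, hkey]
      exact hπ g hg v
    simp only [LinearMap.coe_comp, Function.comp_apply, LinearEquiv.coe_coe]
    rw [hs, hf₂ ⟨g, hg⟩]

/-- Main construction: a nonzero `H`-intertwiner between restrictions of irreducibles
produces a twisting character. -/
lemma exists_twist_of_hom [Finite (G ⧸ H)]
    (hab : ∀ a b : G ⧸ H, a * b = b * a)
    {V₁ V₂ : Type u} [AddCommGroup V₁] [Module ℂ V₁] [AddCommGroup V₂] [Module ℂ V₂]
    {P₁ : Representation ℂ G V₁} {P₂ : Representation ℂ G V₂}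
    (h₁ : IsIrreducibleRep P₁) (h₂ : IsIrreducibleRep P₂)
    (e : V₁ →ₗ[ℂ] V₂) (He : ∀ g ∈ H, ∀ v, e (P₁ g v) = P₂ g (e v)) (hne : e ≠ 0) :
    ∃ χ : TrivOn H, RepEquiv (twist P₁ χ.1) P₂ := by
  classical
  letI : CommGroup (G ⧸ H) := { (inferInstance : Group (G ⧸ H)) with mul_comm := hab }
  haveI : Fintype (G ⧸ H) := Fintype.ofFinite _
  haveI : NeZero ((Monoid.exponent (G ⧸ H) : ℕ) : ℂ) :=
    ⟨Nat.cast_ne_zero.2 Monoid.exponent_ne_zero_of_finite⟩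
  -- characters of `G/H` correspond to `TrivOn H`
  set Ξ : ((G ⧸ H) →* ℂˣ) → TrivOn H := fun ψ =>
    ⟨ψ.comp (QuotientGroup.mk' H), fun h hh => by
      simp only [MonoidHom.comp_apply]
      rw [show (QuotientGroup.mk' H) h = 1 from (QuotientGroup.eq_one_iff h).2 hh, map_one]⟩
    with hΞ
  have hΞinj : Function.Injective Ξ := by
    intro ψ₁ ψ₂ h
    ext x
    have h9 := congrArg (fun χ : TrivOn H => χ.1 x) h
    exact congrArg Units.val (by simpa [hΞ] using h9)
  haveI : Finite (TrivOn H) := by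
    obtain ⟨me⟩ := CommGroup.monoidHom_mulEquiv_of_hasEnoughRootsOfUnity (G ⧸ H) ℂ
    haveI : Finite ((G ⧸ H) →* ℂˣ) := Finite.of_equiv (G ⧸ H) me.toEquiv.symm
    -- `Ξ` is surjective onto `TrivOn H`
    have hsurj : Function.Surjective Ξ := by
      intro χ
      refine ⟨QuotientGroup.lift H χ.1 (fun h hh => χ.2 h hh), ?_⟩
      apply Subtype.ext
      ext g
      simp [hΞ]
      rfl
    exact Finite.of_surjective Ξ hsurj
  haveI : Fintype (TrivOn H) := Fintype.ofFinite _
  have hsep : ∀ g : G, g ∉ H → ∃ χ : TrivOn H, χ.1 g ≠ 1 := by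
    intro g hg
    have ha : (QuotientGroup.mk g : G ⧸ H) ≠ 1 := by
      simpa [QuotientGroup.eq_one_iff] using hg
    obtain ⟨φ, hφ⟩ := CommGroup.exists_apply_ne_one_of_hasEnoughRootsOfUnity (G ⧸ H) ℂ ha
    exact ⟨Ξ φ, by simpa [hΞ] using hφ⟩
  have horth : ∀ g : G, g ∉ H → (∑ χ : TrivOn H, (((χ.1 g)⁻¹ : ℂˣ) : ℂ)) = 0 := by
    intro g hg
    obtain ⟨χ₀, hχ₀⟩ := hsep g hg
    set T : TrivOn H ≃ TrivOn H :=
      { toFun := fun χ => ⟨χ₀.1 * χ.1, fun h hh => by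
          rw [MonoidHom.mul_apply, χ₀.2 h hh, χ.2 h hh, one_mul]⟩
        invFun := fun χ => ⟨χ₀.1⁻¹ * χ.1, fun h hh => by
          rw [MonoidHom.mul_apply, MonoidHom.inv_apply, χ₀.2 h hh, χ.2 h hh, inv_one,
            one_mul]⟩
        left_inv := fun χ => Subtype.ext (inv_mul_cancel_left χ₀.1 χ.1)
        right_inv := fun χ => Subtype.ext (mul_inv_cancel_left χ₀.1 χ.1) } with hT
    have h1 : ∑ χ : TrivOn H, (((χ.1 g)⁻¹ : ℂˣ) : ℂ)
        = ∑ χ : TrivOn H, ((((T χ).1 g)⁻¹ : ℂˣ) : ℂ) := (Equiv.sum_comp T _).symm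
    have h2 : ∀ χ : TrivOn H, ((((T χ).1 g)⁻¹ : ℂˣ) : ℂ)
        = (((χ₀.1 g)⁻¹ : ℂˣ) : ℂ) * (((χ.1 g)⁻¹ : ℂˣ) : ℂ) := by
      intro χ
      simp only [hT, Equiv.coe_fn_mk, MonoidHom.mul_apply]
      show ((((χ₀.1 * χ.1) g)⁻¹ : ℂˣ) : ℂ) = _
      rw [MonoidHom.mul_apply, mul_inv, Units.val_mul]
    rw [Finset.sum_congr rfl (fun χ _ => h2 χ), ← Finset.mul_sum] at h1
    have h3 : ((((χ₀.1 g)⁻¹ : ℂˣ) : ℂ) - 1)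
        * (∑ χ : TrivOn H, (((χ.1 g)⁻¹ : ℂˣ) : ℂ)) = 0 := by
      rw [sub_mul, one_mul, ← h1, sub_self]
    rcases mul_eq_zero.1 h3 with h | h
    · exfalso
      apply hχ₀
      have h4 : (((χ₀.1 g)⁻¹ : ℂˣ) : ℂ) = 1 := by
        have := sub_eq_zero.1 h
        exact this
      have h5 : ((χ₀.1 g)⁻¹ : ℂˣ) = 1 := Units.ext (by simpa using h4)
      exact inv_eq_one.1 h5
    · exact h
  -- the averaged intertwiners
  have hFe : ∀ (a h : G), h ∈ H → ∀ v : V₁,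
      P₂ a⁻¹ (e (P₁ a (P₁ h v))) = P₂ h (P₂ a⁻¹ (e (P₁ a v))) := by
    intro a h hh v
    have hmem : a * h * a⁻¹ ∈ H := Subgroup.Normal.conj_mem ‹H.Normal› h hh a
    have e1 : P₁ a (P₁ h v) = P₁ (a * h * a⁻¹) (P₁ a v) := by
      rw [← P_mul_apply, ← P_mul_apply]
      rw [show a * h * a⁻¹ * a = a * h by group]
    rw [e1, He _ hmem]
    rw [← P_mul_apply, ← P_mul_apply]
    rw [show a⁻¹ * (a * h * a⁻¹) = h * a⁻¹ by group]
  set B : TrivOn H → G → (V₁ →ₗ[ℂ] V₂) := fun χ g =>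
    (((χ.1 g)⁻¹ : ℂˣ) : ℂ) • ((P₂ g⁻¹ : V₂ →ₗ[ℂ] V₂) ∘ₗ e ∘ₗ (P₁ g : V₁ →ₗ[ℂ] V₁)) with hB
  have hBcoset : ∀ (χ : TrivOn H) (a b : G), @Setoid.r G (QuotientGroup.leftRel H) a b → B χ a = B χ b := by
    intro χ a b hab'
    have hh : a⁻¹ * b ∈ H := QuotientGroup.leftRel_apply.1 hab'
    have hbeq : b = a * (a⁻¹ * b) := by group
    rw [hbeq]
    apply LinearMap.ext
    intro v
    simp only [hB, LinearMap.smul_apply, LinearMap.coe_comp, Function.comp_apply]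
    rw [show (a * (a⁻¹ * b))⁻¹ = (a⁻¹ * b)⁻¹ * a⁻¹ from mul_inv_rev _ _]
    rw [P_mul_apply ((a⁻¹ * b)⁻¹) (a⁻¹), P_mul_apply a (a⁻¹ * b), hFe a _ hh, P_inv_cancel]
    rw [map_mul, χ.2 _ hh, mul_one]
  set A : TrivOn H → (G ⧸ H) → (V₁ →ₗ[ℂ] V₂) :=
    fun χ x => Quotient.liftOn' x (B χ) (hBcoset χ) with hA
  have hAmk : ∀ (χ : TrivOn H) (g : G), A χ (QuotientGroup.mk g) = B χ g := fun χ g => rfl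
  set α : TrivOn H → (V₁ →ₗ[ℂ] V₂) := fun χ => ∑ x : G ⧸ H, A χ x with hα
  have hαeq : ∀ (χ : TrivOn H) (g₀ : G) (v : V₁),
      (α χ) (P₁ g₀ v) = ((χ.1 g₀ : ℂˣ) : ℂ) • P₂ g₀ ((α χ) v) := by
    intro χ g₀ v
    have hterm : ∀ x : G ⧸ H, (A χ x) (P₁ g₀ v)
        = ((χ.1 g₀ : ℂˣ) : ℂ) • P₂ g₀ ((A χ (x * QuotientGroup.mk g₀)) v) := by
      intro x
      refine QuotientGroup.induction_on x ?_
      intro g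
      rw [hAmk, show (QuotientGroup.mk g : G ⧸ H) * QuotientGroup.mk g₀
        = QuotientGroup.mk (g * g₀) from rfl, hAmk]
      simp only [hB, LinearMap.smul_apply, LinearMap.coe_comp, Function.comp_apply]
      rw [← P_mul_apply g g₀ v, map_smul, smul_smul,
        ← P_mul_apply g₀ (g * g₀)⁻¹, show g₀ * (g * g₀)⁻¹ = g⁻¹ by group]
      congr 1
      rw [map_mul, mul_inv, Units.val_mul]
      rw [mul_comm (((χ.1 g)⁻¹ : ℂˣ) : ℂ) (((χ.1 g₀)⁻¹ : ℂˣ) : ℂ), ← mul_assoc,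
        show ((χ.1 g₀ : ℂˣ) : ℂ) * (((χ.1 g₀)⁻¹ : ℂˣ) : ℂ) = 1 by
          rw [← Units.val_mul, mul_inv_cancel, Units.val_one], one_mul]
    calc (α χ) (P₁ g₀ v) = ∑ x : G ⧸ H, (A χ x) (P₁ g₀ v) := by
          rw [hα]; exact LinearMap.sum_apply _ _ _
      _ = ∑ x : G ⧸ H, ((χ.1 g₀ : ℂˣ) : ℂ) • P₂ g₀ ((A χ (x * QuotientGroup.mk g₀)) v) :=
          Finset.sum_congr rfl (fun x _ => hterm x)
      _ = ((χ.1 g₀ : ℂˣ) : ℂ) • P₂ g₀ (∑ x : G ⧸ H, (A χ (x * QuotientGroup.mk g₀)) v) := by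
          rw [← Finset.smul_sum, ← map_sum]
      _ = ((χ.1 g₀ : ℂˣ) : ℂ) • P₂ g₀ (∑ y : G ⧸ H, (A χ y) v) := by
          congr 2
          exact Fintype.sum_equiv (Equiv.mulRight (QuotientGroup.mk g₀ : G ⧸ H)) _ _
            (fun x => rfl)
      _ = ((χ.1 g₀ : ℂˣ) : ℂ) • P₂ g₀ ((α χ) v) := by
          rw [hα]; rw [LinearMap.sum_apply]
  have hcard0 : (Fintype.card (TrivOn H) : ℂ) ≠ 0 := by
    have hpos : 0 < Fintype.card (TrivOn H) :=
      Fintype.card_pos_iff.2 ⟨⟨1, fun h _ => rfl⟩⟩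
    exact_mod_cast hpos.ne'
  have hsum : (∑ χ : TrivOn H, α χ) = (Fintype.card (TrivOn H) : ℂ) • e := by
    have hx : ∀ x : G ⧸ H, (∑ χ : TrivOn H, A χ x)
        = if x = (1 : G ⧸ H) then (Fintype.card (TrivOn H) : ℂ) • e else 0 := by
      intro x
      refine QuotientGroup.induction_on x ?_
      intro g
      by_cases hg : g ∈ H
      · rw [if_pos ((QuotientGroup.eq_one_iff g).2 hg)]
        have hBg : ∀ χ : TrivOn H, A χ (QuotientGroup.mk g) = e := by
          intro χ
          rw [hAmk]
          apply LinearMap.ext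
          intro v
          simp only [hB, LinearMap.smul_apply, LinearMap.coe_comp, Function.comp_apply]
          rw [He g hg v, P_inv_cancel, χ.2 g hg, inv_one, Units.val_one, one_smul]
        rw [Finset.sum_congr rfl (fun χ _ => hBg χ), Finset.sum_const, Finset.card_univ]
        rw [← Nat.cast_smul_eq_nsmul ℂ]
      · rw [if_neg (by simpa [QuotientGroup.eq_one_iff] using hg)]
        have hsmul : ∀ χ : TrivOn H, A χ (QuotientGroup.mk g)
            = (((χ.1 g)⁻¹ : ℂˣ) : ℂ)
              • ((P₂ g⁻¹ : V₂ →ₗ[ℂ] V₂) ∘ₗ e ∘ₗ (P₁ g : V₁ →ₗ[ℂ] V₁)) := fun χ => rfl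
        rw [Finset.sum_congr rfl (fun χ _ => hsmul χ), ← Finset.sum_smul, horth g hg,
          zero_smul]
    calc (∑ χ : TrivOn H, α χ) = ∑ χ : TrivOn H, ∑ x : G ⧸ H, A χ x := rfl
      _ = ∑ x : G ⧸ H, ∑ χ : TrivOn H, A χ x := Finset.sum_comm
      _ = ∑ x : G ⧸ H, if x = (1 : G ⧸ H) then (Fintype.card (TrivOn H) : ℂ) • e else 0 :=
          Finset.sum_congr rfl (fun x _ => hx x)
      _ = (Fintype.card (TrivOn H) : ℂ) • e := by
          rw [Finset.sum_ite_eq' Finset.univ (1 : G ⧸ H)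
            (fun _ => (Fintype.card (TrivOn H) : ℂ) • e)]
          rw [if_pos (Finset.mem_univ _)]
  have hex : ∃ χ : TrivOn H, α χ ≠ 0 := by
    by_contra hno
    push_neg at hno
    apply hne
    have h9 : (Fintype.card (TrivOn H) : ℂ) • e = 0 := by
      rw [← hsum]
      exact Finset.sum_eq_zero (fun χ _ => hno χ)
    exact (smul_eq_zero.1 h9).resolve_left hcard0
  obtain ⟨χ, hχ⟩ := hex
  have heq : ∀ (m : G) (v : V₁), (α χ) (P₁ m v) = (twist P₂ χ.1) m ((α χ) v) := by
    intro m v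
    rw [hαeq χ m v, twist_apply]
  have h₂t : IsIrreducibleRep (twist P₂ χ.1) := by
    refine ⟨h₂.1, ?_⟩
    intro W hWinv
    refine h₂.2 W ?_
    intro m v hv
    have h10 := hWinv m v hv
    rw [twist_apply] at h10
    have h7 : P₂ m v = (((χ.1 m)⁻¹ : ℂˣ) : ℂ) • ((χ.1 m : ℂˣ) : ℂ) • P₂ m v := by
      rw [smul_smul, ← Units.val_mul, inv_mul_cancel, Units.val_one, one_smul]
    rw [h7]
    exact Submodule.smul_mem _ _ h10
  have hker := ker_hom_eq_bot h₁ heq hχ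
  have hrange := range_hom_eq_top h₂t heq hχ
  refine ⟨⟨(χ.1)⁻¹, fun h hh => by rw [MonoidHom.inv_apply, χ.2 h hh, inv_one]⟩, ?_⟩
  refine ⟨LinearEquiv.ofBijective (α χ)
    ⟨LinearMap.ker_eq_bot.1 hker, LinearMap.range_eq_top.1 hrange⟩, ?_⟩
  intro m v
  show (α χ) ((twist P₁ (χ.1)⁻¹) m v) = P₂ m ((α χ) v)
  rw [twist_apply, map_smul, hαeq χ m v, MonoidHom.inv_apply]
  rw [smul_smul, ← Units.val_mul, inv_mul_cancel, Units.val_one, one_smul]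

end Stmt1

end Statement1Proof

/-- For `H ◁ G` of finite index with `G/H` abelian and irreducible
representations `P₁, P₂` of `G`, the following are equivalent: (1) the restrictions to `H`
share an irreducible constituent; (2) the restrictions to `H` are isomorphic; (3) `P₂` is
isomorphic to a twist of `P₁` by a character of `G/H`. -/
theorem statement1 {G : Type u} [Group G] (H : Subgroup G) [H.Normal] [Finite (G ⧸ H)]
    (hab : ∀ a b : G ⧸ H, a * b = b * a)
    {V₁ V₂ : Type u} [AddCommGroup V₁] [Module ℂ V₁] [AddCommGroup V₂] [Module ℂ V₂]
    (P₁ : Representation ℂ G V₁) (P₂ : Representation ℂ G V₂)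
    (h₁ : IsIrreducibleRep P₁) (h₂ : IsIrreducibleRep P₂) :
    ((∃ σ : RepOn ↥H, IsIrreducibleRep σ.ρ ∧
        equivHom σ.ρ (resR H P₁) ≠ ⊥ ∧ equivHom σ.ρ (resR H P₂) ≠ ⊥) ↔
      RepEquiv (resR H P₁) (resR H P₂)) ∧
    (RepEquiv (resR H P₁) (resR H P₂) ↔
      ∃ χ : TrivOn H, RepEquiv (twist P₁ χ.1) P₂) := by
  classical
  have h32 : (∃ χ : TrivOn H, RepEquiv (twist P₁ χ.1) P₂) →
      RepEquiv (resR H P₁) (resR H P₂) := by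
    rintro ⟨χ, e, he⟩
    refine ⟨e, ?_⟩
    intro m v
    have h0 := he (↑m : G) v
    rw [twist_apply, χ.2 ↑m m.2, Units.val_one, one_smul] at h0
    exact h0
  have h23 : RepEquiv (resR H P₁) (resR H P₂) →
      ∃ χ : TrivOn H, RepEquiv (twist P₁ χ.1) P₂ := by
    rintro ⟨e, he⟩
    refine Stmt1.exists_twist_of_hom hab h₁ h₂ e.toLinearMap
      (fun g hg v => he ⟨g, hg⟩ v) ?_
    intro h0
    obtain ⟨v₀, hv₀⟩ := h₁.1
    apply hv₀
    have h5 : e v₀ = 0 := by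
      have h6 := congrArg (fun f : V₁ →ₗ[ℂ] V₂ => f v₀) h0
      simpa using h6
    exact (LinearEquiv.map_eq_zero_iff e).1 h5
  have h12 : (∃ σ : RepOn ↥H, IsIrreducibleRep σ.ρ ∧
      equivHom σ.ρ (resR H P₁) ≠ ⊥ ∧ equivHom σ.ρ (resR H P₂) ≠ ⊥) →
      RepEquiv (resR H P₁) (resR H P₂) := by
    rintro ⟨σ, hσ, hn₁, hn₂⟩
    obtain ⟨f₁, hf₁mem, hf₁0⟩ := (Submodule.ne_bot_iff _).1 hn₁
    obtain ⟨f₂, hf₂mem, hf₂0⟩ := (Submodule.ne_bot_iff _).1 hn₂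
    obtain ⟨e, he0, heq⟩ := Stmt1.exists_hom_of_common h₁ σ hσ f₁ hf₁mem hf₁0 f₂ hf₂mem hf₂0
    exact h32 (Stmt1.exists_twist_of_hom hab h₁ h₂ e heq he0)
  have h21 : RepEquiv (resR H P₁) (resR H P₂) →
      (∃ σ : RepOn ↥H, IsIrreducibleRep σ.ρ ∧
        equivHom σ.ρ (resR H P₁) ≠ ⊥ ∧ equivHom σ.ρ (resR H P₂) ≠ ⊥) := by
    rintro ⟨e, he⟩
    have htopne : (⊤ : Submodule ℂ V₁) ≠ ⊥ := by
      obtain ⟨v₀, hv₀⟩ := h₁.1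
      intro h
      apply hv₀
      have h5 : v₀ ∈ (⊥ : Submodule ℂ V₁) := by rw [← h]; trivial
      simpa using h5
    obtain ⟨J, hJs, hJne, -, hJsimp⟩ :=
      Stmt1.exists_simple_le (H := H) h₁ Stmt1.hstab_top htopne
    refine ⟨{ V := ↥J, ρ := Stmt1.subRepr H P₁ J hJs }, ⟨?_, ?_⟩, ?_, ?_⟩
    · obtain ⟨x, hxJ, hx0⟩ := (Submodule.ne_bot_iff _).1 hJne
      exact ⟨⟨x, hxJ⟩, fun hc => hx0 (by simpa using congrArg Subtype.val hc)⟩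
    · intro W hWinv
      have hU : Stmt1.HStab H P₁ (W.map J.subtype) := by
        rintro g hg v ⟨w, hw, rfl⟩
        refine ⟨Stmt1.subRepr H P₁ J hJs ⟨g, hg⟩ w, hWinv ⟨g, hg⟩ w hw, ?_⟩
        simp
      have hle : W.map J.subtype ≤ J := Submodule.map_subtype_le J W
      have hinj := Submodule.map_injective_of_injective J.injective_subtype
      rcases hJsimp _ hU hle with h | h
      · left
        apply hinj
        rw [h, Submodule.map_bot]
      · right
        apply hinj
        rw [h, Submodule.map_subtype_top]
    · refine (Submodule.ne_bot_iff _).2 ⟨J.subtype, ?_, ?_⟩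
      · intro m v
        rfl
      · intro hc
        obtain ⟨x, hxJ, hx0⟩ := (Submodule.ne_bot_iff _).1 hJne
        apply hx0
        have h7 := congrArg (fun f : ↥J →ₗ[ℂ] V₁ => f ⟨x, hxJ⟩) hc
        simpa using h7
    · refine (Submodule.ne_bot_iff _).2 ⟨e.toLinearMap ∘ₗ J.subtype, ?_, ?_⟩
      · intro m v
        exact he m ↑v
      · intro hc
        obtain ⟨x, hxJ, hx0⟩ := (Submodule.ne_bot_iff _).1 hJne
        apply hx0
        have h7 := congrArg (fun f : ↥J →ₗ[ℂ] V₂ => f ⟨x, hxJ⟩) hc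
        simp only [LinearMap.coe_comp, Function.comp_apply, LinearMap.zero_apply] at h7
        have h8 : e x = 0 := by simpa using h7
        exact (LinearEquiv.map_eq_zero_iff e).1 h8
  exact ⟨⟨h12, fun h => h21 h⟩, ⟨h23, h32⟩⟩
end
end

section
/- Let G be a group and H a normal subgroup of finite index with G/H abelian. For any representation Π of G there is a natural G-isomorphism Ind_H^G(Π|_H) ≅ ⊕_{χ ∈ X_H} χΠ, where the sum runs over all characters χ of the finite abelian group G/H. -/
noncomputable section

open scoped TensorProduct DirectSum

universe u

section Statement2Aux

variable {G : Type u} [Group G] (H : Subgroup G) [H.Normal]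

set_option linter.unusedSectionVars false

/-- Lift a character trivial on `H` to the quotient `G ⧸ H`. -/
def liftChar (χ : TrivOn H) : G ⧸ H →* ℂˣ :=
  QuotientGroup.lift H χ.1 fun h hh => χ.2 h hh

@[simp] lemma liftChar_mk (χ : TrivOn H) (g : G) :
    liftChar H χ (QuotientGroup.mk g) = χ.1 g := rfl

lemma liftChar_injective : Function.Injective (liftChar H) := by
  intro χ ψ h
  apply Subtype.ext; apply MonoidHom.ext; intro g
  simpa using DFunLike.congr_fun h (QuotientGroup.mk g)

/-- Multiplication by a fixed character, as a permutation of `TrivOn H`. -/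
def mulTriv (χ₀ : TrivOn H) : TrivOn H ≃ TrivOn H where
  toFun χ := ⟨χ₀.1 * χ.1, fun h hh => by
    rw [MonoidHom.mul_apply, χ₀.2 h hh, χ.2 h hh, one_mul]⟩
  invFun χ := ⟨χ₀.1⁻¹ * χ.1, fun h hh => by
    rw [MonoidHom.mul_apply, MonoidHom.inv_apply, χ₀.2 h hh, χ.2 h hh, inv_one, one_mul]⟩
  left_inv χ := Subtype.ext (inv_mul_cancel_left χ₀.1 χ.1)
  right_inv χ := Subtype.ext (mul_inv_cancel_left χ₀.1 χ.1)

lemma sum_charQ [Fintype (G ⧸ H)] (θ : (G ⧸ H) →* ℂˣ) (hθ : θ ≠ 1) :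
    ∑ q : G ⧸ H, ((θ q : ℂˣ) : ℂ) = 0 := by
  obtain ⟨q₀, hq₀⟩ : ∃ q, θ q ≠ 1 := by
    by_contra hc; push_neg at hc
    exact hθ (MonoidHom.ext fun q => by rw [hc q]; rfl)
  have h1 : ∑ q : G ⧸ H, ((θ (q₀ * q) : ℂˣ) : ℂ) = ∑ q : G ⧸ H, ((θ q : ℂˣ) : ℂ) :=
    Fintype.sum_equiv (Equiv.mulLeft q₀) _ _ fun q => rfl
  have h2 : ∑ q : G ⧸ H, ((θ (q₀ * q) : ℂˣ) : ℂ)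
      = ((θ q₀ : ℂˣ) : ℂ) * ∑ q : G ⧸ H, ((θ q : ℂˣ) : ℂ) := by
    rw [Finset.mul_sum]
    exact Finset.sum_congr rfl fun q _ => by rw [map_mul]; push_cast; ring
  have h3 : (((θ q₀ : ℂˣ) : ℂ) - 1) * ∑ q : G ⧸ H, ((θ q : ℂˣ) : ℂ) = 0 := by
    rw [sub_mul, one_mul, ← h2, h1, sub_self]
  have h4 : (((θ q₀ : ℂˣ) : ℂ) - 1) ≠ 0 := sub_ne_zero.mpr fun hc => hq₀ (Units.ext hc)
  rcases mul_eq_zero.mp h3 with h | h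
  · exact absurd h h4
  · exact h

lemma sum_charX [Fintype (TrivOn H)]
    (sep : ∀ g : G, g ∉ H → ∃ χ : TrivOn H, χ.1 g ≠ 1) (g : G) (hg : g ∉ H) :
    ∑ χ : TrivOn H, ((χ.1 g : ℂˣ) : ℂ) = 0 := by
  obtain ⟨χ₀, hχ₀⟩ := sep g hg
  have h1 : ∑ χ : TrivOn H, (((mulTriv H χ₀ χ).1 g : ℂˣ) : ℂ)
      = ∑ χ : TrivOn H, ((χ.1 g : ℂˣ) : ℂ) :=
    Fintype.sum_equiv (mulTriv H χ₀) _ _ fun χ => rfl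
  have h2 : ∑ χ : TrivOn H, (((mulTriv H χ₀ χ).1 g : ℂˣ) : ℂ)
      = ((χ₀.1 g : ℂˣ) : ℂ) * ∑ χ : TrivOn H, ((χ.1 g : ℂˣ) : ℂ) := by
    rw [Finset.mul_sum]
    refine Finset.sum_congr rfl fun χ _ => ?_
    show (((χ₀.1 * χ.1) g : ℂˣ) : ℂ) = _
    rw [MonoidHom.mul_apply]; push_cast; ring
  have h3 : (((χ₀.1 g : ℂˣ) : ℂ) - 1) * ∑ χ : TrivOn H, ((χ.1 g : ℂˣ) : ℂ) = 0 := by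
    rw [sub_mul, one_mul, ← h2, h1, sub_self]
  have h4 : (((χ₀.1 g : ℂˣ) : ℂ) - 1) ≠ 0 := sub_ne_zero.mpr fun hc => hχ₀ (Units.ext hc)
  rcases mul_eq_zero.mp h3 with h | h
  · exact absurd h h4
  · exact h

/-- The coset-wise summand of the Fourier coefficient map. -/
def coreQ (P : RepOn G) (χ : TrivOn H) (w : ↥(IndSpace H (resR H P.ρ))) :
    G ⧸ H → P.V := fun q =>
  Quotient.liftOn' q
    (fun x => ((χ.1 x⁻¹ : ℂˣ) : ℂ) • (P.ρ x⁻¹ ((w : G → P.V) x)))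
    (by
      intro x y hxy
      have hxy' : x⁻¹ * y ∈ H := QuotientGroup.leftRel_apply.mp hxy
      have hk : y * x⁻¹ ∈ H := by
        have h2 := (‹H.Normal›).conj_mem _ hxy' x
        have e : x * (x⁻¹ * y) * x⁻¹ = y * x⁻¹ := by group
        rwa [e] at h2
      have hw : (w : G → P.V) y = P.ρ (y * x⁻¹) ((w : G → P.V) x) := by
        have h3 := w.2 ⟨y * x⁻¹, hk⟩ x
        simpa [inv_mul_cancel_right] using h3
      have hχ : χ.1 y⁻¹ = χ.1 x⁻¹ := by
        have h1 : χ.1 (x⁻¹ * y) = 1 := χ.2 _ hxy'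
        have e : y⁻¹ = (x⁻¹ * y)⁻¹ * x⁻¹ := by group
        rw [e, map_mul, map_inv, h1, inv_one, one_mul]
      rw [hχ, hw, ← Module.End.mul_apply, ← map_mul]
      have e2 : y⁻¹ * (y * x⁻¹) = x⁻¹ := by group
      rw [e2])

@[simp] lemma coreQ_mk (P : RepOn G) (χ : TrivOn H) (w : ↥(IndSpace H (resR H P.ρ)))
    (x : G) :
    coreQ H P χ w (QuotientGroup.mk x)
      = ((χ.1 x⁻¹ : ℂˣ) : ℂ) • (P.ρ x⁻¹ ((w : G → P.V) x)) := rfl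

lemma coreQ_add (P : RepOn G) (χ : TrivOn H) (a b : ↥(IndSpace H (resR H P.ρ)))
    (q : G ⧸ H) : coreQ H P χ (a + b) q = coreQ H P χ a q + coreQ H P χ b q := by
  refine QuotientGroup.induction_on q fun x => ?_
  simp [coreQ_mk, smul_add]

lemma coreQ_smul (P : RepOn G) (χ : TrivOn H) (c : ℂ) (a : ↥(IndSpace H (resR H P.ρ)))
    (q : G ⧸ H) : coreQ H P χ (c • a) q = c • coreQ H P χ a q := by
  refine QuotientGroup.induction_on q fun x => ?_
  simp [coreQ_mk, smul_comm c]

/-- The Fourier coefficient map `Ind_H^G(P|_H) → ⊕_χ P.V`. -/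
def Emap (P : RepOn G) [Fintype (G ⧸ H)] [Fintype (TrivOn H)] [DecidableEq (TrivOn H)] :
    ↥(IndSpace H (resR H P.ρ)) →ₗ[ℂ] ⨁ _χ : TrivOn H, P.V where
  toFun w := ∑ χ : TrivOn H,
    DirectSum.lof ℂ (TrivOn H) (fun _ => P.V) χ (∑ q : G ⧸ H, coreQ H P χ w q)
  map_add' a b := by
    simp only [coreQ_add, Finset.sum_add_distrib, map_add]
  map_smul' c a := by
    simp only [coreQ_smul, ← Finset.smul_sum, map_smul, RingHom.id_apply]

lemma Emap_apply (P : RepOn G) [Fintype (G ⧸ H)] [Fintype (TrivOn H)]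
    [DecidableEq (TrivOn H)] (w : ↥(IndSpace H (resR H P.ρ))) (χ : TrivOn H) :
    Emap H P w χ = ∑ q : G ⧸ H, coreQ H P χ w q := by
  show (∑ χ' : TrivOn H,
    DirectSum.lof ℂ (TrivOn H) (fun _ => P.V) χ' (∑ q : G ⧸ H, coreQ H P χ' w q)) χ = _
  rw [DFinsupp.finset_sum_apply]
  rw [Finset.sum_eq_single χ]
  · exact DirectSum.lof_apply ℂ χ _
  · intro ψ _ hne
    rw [DirectSum.lof_eq_of]
    exact DirectSum.of_eq_of_ne _ _ _ hne.symm
  · intro h; exact absurd (Finset.mem_univ χ) h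

/-- The inverse-direction map `⊕_χ P.V → Ind_H^G(P|_H)`. -/
def Dmap (P : RepOn G) [Fintype (TrivOn H)] :
    (⨁ _χ : TrivOn H, P.V) →ₗ[ℂ] ↥(IndSpace H (resR H P.ρ)) where
  toFun v := ⟨fun x => P.ρ x (∑ χ : TrivOn H, ((χ.1 x : ℂˣ) : ℂ) • v χ), by
    intro h g
    have hχ : ∀ χ : TrivOn H, χ.1 (↑h * g) = χ.1 g := fun χ => by
      rw [map_mul, χ.2 h h.2, one_mul]
    dsimp only
    simp only [hχ]
    rw [map_mul, Module.End.mul_apply]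
    rfl⟩
  map_add' a b := by
    apply Subtype.ext; funext x
    show P.ρ x (∑ χ : TrivOn H, ((χ.1 x : ℂˣ) : ℂ) • (a + b) χ) = _
    simp [DirectSum.add_apply, smul_add, Finset.sum_add_distrib]
  map_smul' c a := by
    apply Subtype.ext; funext x
    show P.ρ x (∑ χ : TrivOn H, ((χ.1 x : ℂˣ) : ℂ) • (c • a) χ) = _
    have h1 : (∑ χ : TrivOn H, ((χ.1 x : ℂˣ) : ℂ) • (c • a) χ)
        = c • ∑ χ : TrivOn H, ((χ.1 x : ℂˣ) : ℂ) • a χ := by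
      rw [Finset.smul_sum]
      exact Finset.sum_congr rfl fun χ _ => by
        rw [DFinsupp.smul_apply]; exact smul_comm _ _ _
    rw [h1, map_smul]
    rfl

lemma Dmap_coe (P : RepOn G) [Fintype (TrivOn H)] (v : ⨁ _χ : TrivOn H, P.V) (x : G) :
    ((Dmap H P v : ↥(IndSpace H (resR H P.ρ))) : G → P.V) x
      = P.ρ x (∑ χ : TrivOn H, ((χ.1 x : ℂˣ) : ℂ) • v χ) := rfl

end Statement2Aux

/-- For `H ◁ G` of finite index with `G/H` abelian, there is a natural
`G`-isomorphism `Ind_H^G (P|_H) ≅ ⊕_{χ ∈ X_H} χP` for every representation `P` of `G`;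
the target carries the componentwise twisted action, and the isomorphism is functorial
in `P`. -/
theorem statement2 {G : Type u} [Group G] (H : Subgroup G) [H.Normal] [Finite (G ⧸ H)]
    (hab : ∀ a b : G ⧸ H, a * b = b * a) :
    ∃ e : ∀ P : RepOn G, ↥(IndSpace H (resR H P.ρ)) ≃ₗ[ℂ] (⨁ _χ : TrivOn H, P.V),
      (∀ (P : RepOn G) (g : G) (w : ↥(IndSpace H (resR H P.ρ))) (χ : TrivOn H),
          e P (indRep H (resR H P.ρ) g w) χ = (χ.1 g : ℂ) • P.ρ g (e P w χ)) ∧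
      (∀ (P₁ P₂ : RepOn G) (α : P₁.V →ₗ[ℂ] P₂.V)
          (hα : ∀ (g : G) (v : P₁.V), α (P₁.ρ g v) = P₂.ρ g (α v))
          (w : ↥(IndSpace H (resR H P₁.ρ))) (χ : TrivOn H),
          e P₂ (indMap H (resR H P₁.ρ) (resR H P₂.ρ) α (fun h v => hα ↑h v) w) χ
            = α (e P₁ w χ)) := by
  classical
  letI : CommGroup (G ⧸ H) := { (inferInstance : Group (G ⧸ H)) with mul_comm := hab }
  haveI : Fintype (G ⧸ H) := Fintype.ofFinite _
  have sep : ∀ g : G, g ∉ H → ∃ χ : TrivOn H, χ.1 g ≠ 1 := by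
    intro g hg
    have hne : (QuotientGroup.mk g : G ⧸ H) ≠ 1 := by
      simpa [QuotientGroup.eq_one_iff] using hg
    obtain ⟨φ, hφ⟩ := CommGroup.exists_apply_ne_one_of_hasEnoughRootsOfUnity (G ⧸ H) ℂ hne
    refine ⟨⟨φ.comp (QuotientGroup.mk' H), fun h hh => ?_⟩, hφ⟩
    show φ (QuotientGroup.mk h) = 1
    rw [(QuotientGroup.eq_one_iff h).mpr hh, map_one]
  haveI : Finite ((G ⧸ H) →* ℂˣ) := by
    obtain ⟨e⟩ := CommGroup.monoidHom_mulEquiv_of_hasEnoughRootsOfUnity (G ⧸ H) ℂ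
    exact Finite.of_equiv _ e.toEquiv.symm
  haveI : Finite (TrivOn H) := Finite.of_injective (liftChar H) (liftChar_injective H)
  haveI : Fintype (TrivOn H) := Fintype.ofFinite _
  haveI : Nonempty (TrivOn H) := ⟨⟨1, fun h _ => rfl⟩⟩
  have hQsum : ∀ ψ χ : TrivOn H,
      ∑ q : G ⧸ H, (((liftChar H ψ * (liftChar H χ)⁻¹) q : ℂˣ) : ℂ)
        = if ψ = χ then (Fintype.card (G ⧸ H) : ℂ) else 0 := by
    intro ψ χ
    by_cases h : ψ = χ
    · subst h
      rw [if_pos rfl]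
      have h1 : liftChar H ψ * (liftChar H ψ)⁻¹ = 1 := MonoidHom.ext fun q => by
        simp [MonoidHom.mul_apply, MonoidHom.inv_apply]
      simp [h1]
    · rw [if_neg h]
      refine sum_charQ H _ fun hc => h (liftChar_injective H (MonoidHom.ext fun q => ?_))
      have h2 := DFunLike.congr_fun hc q
      simp only [MonoidHom.mul_apply, MonoidHom.inv_apply, MonoidHom.one_apply] at h2
      exact mul_inv_eq_one.mp h2
  have hXsum : ∀ g : G, ∑ χ : TrivOn H, ((χ.1 g : ℂˣ) : ℂ)
      = if g ∈ H then (Fintype.card (TrivOn H) : ℂ) else 0 := by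
    intro g
    by_cases hg : g ∈ H
    · rw [if_pos hg]
      have h1 : ∀ χ : TrivOn H, ((χ.1 g : ℂˣ) : ℂ) = 1 := fun χ => by
        rw [χ.2 g hg, Units.val_one]
      simp [h1]
    · rw [if_neg hg]; exact sum_charX H sep g hg
  have hED : ∀ (P : RepOn G) (v : ⨁ _χ : TrivOn H, P.V) (χ : TrivOn H),
      Emap H P (Dmap H P v) χ = (Fintype.card (G ⧸ H) : ℂ) • v χ := by
    intro P v χ
    rw [Emap_apply]
    have key : ∀ q : G ⧸ H, coreQ H P χ (Dmap H P v) q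
        = ∑ ψ : TrivOn H, (((liftChar H ψ * (liftChar H χ)⁻¹) q : ℂˣ) : ℂ) • v ψ := by
      intro q
      refine QuotientGroup.induction_on q fun y => ?_
      rw [coreQ_mk, Dmap_coe]
      have hid : ∀ t : P.V, P.ρ y⁻¹ (P.ρ y t) = t := fun t => by
        rw [← Module.End.mul_apply, ← map_mul, inv_mul_cancel, map_one, Module.End.one_apply]
      rw [hid, Finset.smul_sum]
      refine Finset.sum_congr rfl fun ψ _ => ?_
      rw [smul_smul]
      congr 1
      simp only [map_inv, MonoidHom.mul_apply, MonoidHom.inv_apply, Units.val_mul,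
        liftChar_mk]
      exact mul_comm _ _
    rw [Finset.sum_congr rfl fun q _ => key q, Finset.sum_comm]
    have h2 : ∀ ψ : TrivOn H,
        (∑ q : G ⧸ H, (((liftChar H ψ * (liftChar H χ)⁻¹) q : ℂˣ) : ℂ) • v ψ)
          = (if ψ = χ then (Fintype.card (G ⧸ H) : ℂ) else 0) • v ψ := fun ψ => by
      rw [← Finset.sum_smul, hQsum]
    rw [Finset.sum_congr rfl fun ψ _ => h2 ψ]
    simp only [ite_smul, zero_smul, Finset.sum_ite_eq', Finset.mem_univ, if_true]
  have hDE : ∀ (P : RepOn G) (w : ↥(IndSpace H (resR H P.ρ))),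
      Dmap H P (Emap H P w) = (Fintype.card (TrivOn H) : ℂ) • w := by
    intro P w
    apply Subtype.ext; funext x
    have hR : ((((Fintype.card (TrivOn H) : ℂ)) • w : ↥(IndSpace H (resR H P.ρ))) : G → P.V) x
        = (Fintype.card (TrivOn H) : ℂ) • (w : G → P.V) x := rfl
    rw [hR, Dmap_coe]
    have h1 : ∀ χ : TrivOn H, ((χ.1 x : ℂˣ) : ℂ) • (Emap H P w) χ
        = ∑ q : G ⧸ H, ((χ.1 x : ℂˣ) : ℂ) • coreQ H P χ w q := fun χ => by
      rw [Emap_apply, Finset.smul_sum]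
    rw [Finset.sum_congr rfl fun χ _ => h1 χ, Finset.sum_comm, map_sum]
    have key : ∀ q : G ⧸ H,
        P.ρ x (∑ χ : TrivOn H, ((χ.1 x : ℂˣ) : ℂ) • coreQ H P χ w q)
          = if QuotientGroup.mk x = q
              then (Fintype.card (TrivOn H) : ℂ) • (w : G → P.V) x else 0 := by
      intro q
      refine QuotientGroup.induction_on q fun y => ?_
      have hsum : (∑ χ : TrivOn H, ((χ.1 x : ℂˣ) : ℂ) • coreQ H P χ w (QuotientGroup.mk y))
          = (∑ χ : TrivOn H, ((χ.1 (x * y⁻¹) : ℂˣ) : ℂ)) • (P.ρ y⁻¹ ((w : G → P.V) y)) := by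
        rw [Finset.sum_smul]
        refine Finset.sum_congr rfl fun χ _ => ?_
        rw [coreQ_mk, smul_smul]
        congr 1
        rw [map_mul, Units.val_mul]
      rw [hsum, hXsum]
      by_cases hxy : x * y⁻¹ ∈ H
      · have hmk : (QuotientGroup.mk x : G ⧸ H) = QuotientGroup.mk y := by
          have h2 := (‹H.Normal›).conj_mem _ hxy x⁻¹
          have e : x⁻¹ * (x * y⁻¹) * x⁻¹⁻¹ = y⁻¹ * x := by group
          rw [e] at h2
          refine QuotientGroup.eq.mpr ?_
          have h3 := H.inv_mem h2
          rwa [mul_inv_rev, inv_inv] at h3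
        rw [if_pos hxy, if_pos hmk, map_smul]
        congr 1
        have hw : (w : G → P.V) x = P.ρ (x * y⁻¹) ((w : G → P.V) y) := by
          have h3 := w.2 ⟨x * y⁻¹, hxy⟩ y
          simpa [inv_mul_cancel_right] using h3
        rw [hw, ← Module.End.mul_apply, ← map_mul]
      · rw [if_neg hxy, zero_smul, map_zero]
        have hne : ¬ ((QuotientGroup.mk x : G ⧸ H) = QuotientGroup.mk y) := by
          intro hc
          have h2 := QuotientGroup.eq.mp hc
          have h3 := (‹H.Normal›).conj_mem _ h2 x
          have e : x * (x⁻¹ * y) * x⁻¹ = y * x⁻¹ := by group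
          rw [e] at h3
          have h4 := H.inv_mem h3
          rw [mul_inv_rev, inv_inv] at h4
          exact hxy h4
        rw [if_neg hne]
    rw [Finset.sum_congr rfl fun q _ => key q]
    rw [Finset.sum_ite_eq]
    simp
  have hEquiv : ∀ (P : RepOn G) (g : G) (w : ↥(IndSpace H (resR H P.ρ))) (χ : TrivOn H),
      Emap H P (indRep H (resR H P.ρ) g w) χ
        = ((χ.1 g : ℂˣ) : ℂ) • P.ρ g (Emap H P w χ) := by
    intro P g w χ
    rw [Emap_apply, Emap_apply, map_sum, Finset.smul_sum]
    refine (Fintype.sum_equiv (Equiv.mulRight (QuotientGroup.mk g⁻¹ : G ⧸ H)) _ _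
      fun q => ?_).symm
    refine QuotientGroup.induction_on q fun y => ?_
    have hq : ((Equiv.mulRight (QuotientGroup.mk g⁻¹ : G ⧸ H))
        (QuotientGroup.mk y) : G ⧸ H) = QuotientGroup.mk (y * g⁻¹) := rfl
    rw [hq, coreQ_mk, coreQ_mk, indRep_apply, inv_mul_cancel_right]
    have e1 : (y * g⁻¹)⁻¹ = g * y⁻¹ := by group
    rw [e1, map_mul, Units.val_mul, map_mul, Module.End.mul_apply, map_smul, smul_smul]
  have hNat : ∀ (P₁ P₂ : RepOn G) (α : P₁.V →ₗ[ℂ] P₂.V)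
      (hα : ∀ (g : G) (v : P₁.V), α (P₁.ρ g v) = P₂.ρ g (α v))
      (w : ↥(IndSpace H (resR H P₁.ρ))) (χ : TrivOn H),
      Emap H P₂ (indMap H (resR H P₁.ρ) (resR H P₂.ρ) α (fun h v => hα ↑h v) w) χ
        = α (Emap H P₁ w χ) := by
    intro P₁ P₂ α hα w χ
    rw [Emap_apply, Emap_apply, map_sum]
    refine Finset.sum_congr rfl fun q _ => ?_
    refine QuotientGroup.induction_on q fun y => ?_
    rw [coreQ_mk, coreQ_mk, map_smul]
    congr 1
    rw [hα]
    rfl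
  have hm : (Fintype.card (TrivOn H) : ℂ) ≠ 0 := Nat.cast_ne_zero.mpr Fintype.card_ne_zero
  have hn : (Fintype.card (G ⧸ H) : ℂ) ≠ 0 := Nat.cast_ne_zero.mpr Fintype.card_ne_zero
  have hbij : ∀ P : RepOn G, Function.Bijective (Emap H P) := by
    intro P
    constructor
    · intro w₁ w₂ hEq
      have h2 := congrArg (Dmap H P) hEq
      rw [hDE, hDE] at h2
      calc w₁ = (Fintype.card (TrivOn H) : ℂ)⁻¹ • ((Fintype.card (TrivOn H) : ℂ) • w₁) := by
            rw [smul_smul, inv_mul_cancel₀ hm, one_smul]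
        _ = w₂ := by rw [h2, smul_smul, inv_mul_cancel₀ hm, one_smul]
    · intro v
      refine ⟨(Fintype.card (G ⧸ H) : ℂ)⁻¹ • Dmap H P v, ?_⟩
      rw [map_smul]
      refine DFinsupp.ext fun χ => ?_
      rw [DFinsupp.smul_apply, hED, smul_smul, inv_mul_cancel₀ hn, one_smul]
  refine ⟨fun P => LinearEquiv.ofBijective (Emap H P) (hbij P), ?_, ?_⟩
  · intro P g w χ
    rw [LinearEquiv.ofBijective_apply, LinearEquiv.ofBijective_apply]
    exact hEquiv P g w χ
  · intro P₁ P₂ α hα w χ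
    rw [LinearEquiv.ofBijective_apply, LinearEquiv.ofBijective_apply]
    exact hNat P₁ P₂ α hα w χ
end
end

section
/- Let G be a group and H ◁ G of finite index. For a representation π of H, the restriction of the induced representation decomposes as (Ind_H^G π)|_H ≅ ⊕_{g ∈ G/H} π^g, realized by the evaluation maps e_g : Ind_H^G π → π^g, w ↦ w(g), with sections e_g* extending by zero; the projectors p_g = e_g* ∘ e_g satisfy p_s p_t = p_s if s ≡ t mod H, p_s p_t = 0 otherwise, and ∑_{g ∈ G/H} p_g = Id. -/
noncomputable section

open scoped TensorProduct DirectSum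

universe u

section Aux

variable {G : Type u} [Group G] (H : Subgroup G)
variable {V : Type u} [AddCommGroup V] [Module ℂ V]

lemma coset_eval (π : Representation ℂ H V) (w : ↥(IndSpace H π)) {a b : G}
    (hab : a * b⁻¹ ∈ H) : (w : G → V) a = π ⟨a * b⁻¹, hab⟩ ((w : G → V) b) := by
  have := w.2 ⟨a * b⁻¹, hab⟩ b
  simpa [mul_assoc] using this

lemma projAt_coe [DecidablePred (· ∈ H)] (π : Representation ℂ H V) (g : G)
    (w : ↥(IndSpace H π)) (x : G) :
    ((projAt H π g w : ↥(IndSpace H π)) : G → V) x =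
      if hx : x * g⁻¹ ∈ H then π ⟨x * g⁻¹, hx⟩ ((w : G → V) g) else 0 := rfl

end Aux
lemma mk_eq_iff_mem {G : Type u} [Group G] (H : Subgroup G) [H.Normal] {a b : G} :
    (QuotientGroup.mk a : G ⧸ H) = QuotientGroup.mk b ↔ a * b⁻¹ ∈ H := by
  rw [QuotientGroup.eq]
  constructor
  · intro h
    have := ‹H.Normal›.conj_mem _ (H.inv_mem h) a
    simpa [mul_assoc] using this
  · intro h
    have := ‹H.Normal›.conj_mem _ (H.inv_mem h) a⁻¹
    simpa [mul_assoc] using this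
set_option synthInstance.maxHeartbeats 1000000 in
set_option maxHeartbeats 1000000 in
/-- For `H ◁ G` of finite index and a representation `π` of `H`, the
restriction of `Ind_H^G π` to `H` decomposes as `⊕_{g ∈ G/H} π^g`, realized by the
evaluation maps `e_g : w ↦ w g` (which intertwine `(Ind_H^G π)|_H` with the conjugate
representation `π^g`), with the extension-by-zero maps `e_g^*` as sections; the projectors
`p_g = e_g^* ∘ e_g` satisfy `p_s ∘ p_t = p_s` if `s ≡ t mod H`, `p_s ∘ p_t = 0` otherwise,
and `∑_{g ∈ G/H} p_g = Id`. -/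
theorem statement7 {G : Type u} [Group G] (H : Subgroup G) [H.Normal] [Fintype (G ⧸ H)]
    [DecidablePred (· ∈ H)]
    {V : Type u} [AddCommGroup V] [Module ℂ V] (π : Representation ℂ H V)
    (R : G ⧸ H → G) (hR : ∀ x, QuotientGroup.mk (R x) = x) :
    (∀ (g : G) (h : ↥H) (w : ↥(IndSpace H π)),
        evalAt H π g (indRep H π ↑h w) = conjRep H π g⁻¹ h (evalAt H π g w)) ∧
    (∀ g : G, evalAt H π g ∘ₗ extAt H π g = LinearMap.id) ∧
    (∀ s t : G, s * t⁻¹ ∈ H → projAt H π s ∘ₗ projAt H π t = projAt H π s) ∧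
    (∀ s t : G, s * t⁻¹ ∉ H → projAt H π s ∘ₗ projAt H π t = 0) ∧
    (∑ x : G ⧸ H, projAt H π (R x)) = LinearMap.id ∧
    ∃ e : ↥(IndSpace H π) ≃ₗ[ℂ] ((x : G ⧸ H) → V),
      (∀ (w : ↥(IndSpace H π)) (x : G ⧸ H), e w x = evalAt H π (R x) w) ∧
      (∀ (h : ↥H) (w : ↥(IndSpace H π)) (x : G ⧸ H),
        e (indRep H π ↑h w) x = conjRep H π (R x)⁻¹ h (e w x)) := by
  classical
  have part1 : ∀ (g : G) (h : ↥H) (w : ↥(IndSpace H π)),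
      evalAt H π g (indRep H π ↑h w) = conjRep H π g⁻¹ h (evalAt H π g w) := by
    intro g h w
    have hmem : g * ↑h * g⁻¹ ∈ H := by simpa using ‹H.Normal›.conj_mem ↑h h.2 g
    simp only [evalAt_apply, indRep_apply, conjRep_apply, inv_inv]
    exact coset_eval H π w hmem
  have part2 : ∀ g : G, evalAt H π g ∘ₗ extAt H π g = LinearMap.id := by
    intro g
    apply LinearMap.ext; intro v
    have h1 : g * g⁻¹ ∈ H := by simpa using H.one_mem
    show (if hx : g * g⁻¹ ∈ H then π ⟨g * g⁻¹, hx⟩ v else 0) = v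
    rw [dif_pos h1]
    have h2 : (⟨g * g⁻¹, h1⟩ : H) = 1 := Subtype.ext (by simp)
    rw [h2, map_one]
    rfl
  have part3 : ∀ s t : G, s * t⁻¹ ∈ H → projAt H π s ∘ₗ projAt H π t = projAt H π s := by
    intro s t hst
    apply LinearMap.ext; intro w
    apply Subtype.ext; funext x
    simp only [LinearMap.comp_apply, projAt_coe]
    split_ifs with hx
    · rw [coset_eval H π w hst]
    · rfl
  have part4 : ∀ s t : G, s * t⁻¹ ∉ H → projAt H π s ∘ₗ projAt H π t = 0 := by
    intro s t hst
    apply LinearMap.ext; intro w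
    apply Subtype.ext; funext x
    simp only [LinearMap.comp_apply, projAt_coe, dif_neg hst, map_zero,
      LinearMap.zero_apply, ZeroMemClass.coe_zero, Pi.zero_apply, dite_eq_ite, ite_self]
  have hRmem : ∀ g : G, g * (R (QuotientGroup.mk g))⁻¹ ∈ H := by
    intro g
    exact (mk_eq_iff_mem H).mp (hR (QuotientGroup.mk g)).symm
  have part5 : (∑ x : G ⧸ H, projAt H π (R x)) = LinearMap.id := by
    apply LinearMap.ext; intro w
    apply Subtype.ext; funext y
    have hcoe : (((∑ x : G ⧸ H, projAt H π (R x)) w : ↥(IndSpace H π)) : G → V) y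
        = ∑ x : G ⧸ H, ((projAt H π (R x) w : ↥(IndSpace H π)) : G → V) y := by
      rw [LinearMap.sum_apply]
      rw [AddSubmonoidClass.coe_finset_sum]
      rw [Finset.sum_apply]
    rw [hcoe]
    rw [Finset.sum_eq_single_of_mem (QuotientGroup.mk y) (Finset.mem_univ _)]
    · rw [projAt_coe, dif_pos (hRmem y)]
      exact (coset_eval H π w (hRmem y)).symm
    · intro x _ hx
      rw [projAt_coe, dif_neg]
      intro hc
      apply hx
      have : (QuotientGroup.mk y : G ⧸ H) = QuotientGroup.mk (R x) :=
        (mk_eq_iff_mem H).mpr hc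
      rw [this, hR]
  -- the linear equivalence
  let eF : ↥(IndSpace H π) →ₗ[ℂ] ((x : G ⧸ H) → V) :=
    { toFun := fun w x => (w : G → V) (R x)
      map_add' := by intro a b; funext x; simp
      map_smul' := by intro c a; funext x; simp }
  let eI : ((x : G ⧸ H) → V) →ₗ[ℂ] ↥(IndSpace H π) :=
    { toFun := fun v => ⟨fun g =>
        π ⟨g * (R (QuotientGroup.mk g))⁻¹, hRmem g⟩ (v (QuotientGroup.mk g)), by
          intro h g
          dsimp only
          have hq : (QuotientGroup.mk (↑h * g) : G ⧸ H) = QuotientGroup.mk g :=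
            (mk_eq_iff_mem H).mpr (by simp [mul_assoc, h.2])
          simp only [hq]
          have he : (⟨↑h * g * (R (QuotientGroup.mk g))⁻¹,
              by simpa [mul_assoc] using H.mul_mem h.2 (hRmem g)⟩ : H)
              = h * ⟨g * (R (QuotientGroup.mk g))⁻¹, hRmem g⟩ :=
            Subtype.ext (by simp [mul_assoc])
          calc π ⟨↑h * g * (R (QuotientGroup.mk g))⁻¹,
                by simpa [mul_assoc] using H.mul_mem h.2 (hRmem g)⟩
                (v (QuotientGroup.mk g))
              = π (h * ⟨g * (R (QuotientGroup.mk g))⁻¹, hRmem g⟩)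
                (v (QuotientGroup.mk g)) :=
                congrArg (fun k : H => π k (v (QuotientGroup.mk g))) he
            _ = π h (π ⟨g * (R (QuotientGroup.mk g))⁻¹, hRmem g⟩
                (v (QuotientGroup.mk g))) := by rw [map_mul]; rfl⟩
      map_add' := by
        intro a b; apply Subtype.ext; funext g; simp
      map_smul' := by
        intro c a; apply Subtype.ext; funext g; simp }
  have h1 : eF ∘ₗ eI = LinearMap.id := by
    apply LinearMap.ext; intro v
    funext x
    show π ⟨R x * (R (QuotientGroup.mk (R x)))⁻¹, hRmem (R x)⟩
        (v (QuotientGroup.mk (R x))) = v x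
    simp only [hR]
    have he : (⟨R x * (R x)⁻¹, by simpa using H.one_mem⟩ : H) = 1 :=
      Subtype.ext (by simp)
    calc π ⟨R x * (R x)⁻¹, by simpa using H.one_mem⟩ (v x)
        = π 1 (v x) := congrArg (fun k : H => π k (v x)) he
      _ = v x := by rw [map_one]; rfl
  have h2 : eI ∘ₗ eF = LinearMap.id := by
    apply LinearMap.ext; intro w
    apply Subtype.ext; funext g
    show π ⟨g * (R (QuotientGroup.mk g))⁻¹, hRmem g⟩
        ((w : G → V) (R (QuotientGroup.mk g))) = (w : G → V) g
    exact (coset_eval H π w (hRmem g)).symm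
  refine ⟨part1, part2, part3, part4, part5,
    LinearEquiv.ofLinear eF eI h1 h2, ?_, ?_⟩
  · intro w x; rfl
  · intro h w x
    exact part1 (R x) h w
end
end

section
/- Let G be a group, H ◁ G of finite index with G/H abelian, and C a suitable full subcategory of representations of G (stable under twisting by characters of G/H and under tensoring by representations of G/H). For an endomorphism φ of the forgetful functor on C and g ∈ G, the following are equivalent: (1) φ composed with the action of g⁻¹ commutes with all H-intertwiners between objects of C; (2) for all π ∈ C and all representations ρ of G/H, φ(ρ⊗π) = ρ(g)⊗φ(π); (3) the same with ρ ranging only over irreducible representations of G/H. -/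
noncomputable section

open scoped TensorProduct DirectSum

universe u

/-- Tensor product of a representation of `G/H` with a representation of `G`
(`(ρ ⊗ π)(g) = ρ(gH) ⊗ π(g)`). -/
def tensorRepOn {G : Type u} [Group G] (H : Subgroup G) [H.Normal]
    (W : RepOn (G ⧸ H)) (P : RepOn G) : RepOn G where
  V := TensorProduct ℂ W.V P.V
  ρ :=
    { toFun := fun g => TensorProduct.map (W.ρ ((g : G ⧸ H))) (P.ρ g)
      map_one' := by
        try dsimp only
        rw [show ((1 : G) : G ⧸ H) = 1 by simp, map_one, map_one, TensorProduct.map_one]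
      map_mul' := by
        intro a b
        try dsimp only
        rw [show ((a * b : G) : G ⧸ H) = ((a : G ⧸ H)) * ((b : G ⧸ H)) by simp,
          map_mul, map_mul, TensorProduct.map_mul] }

section Aux

open Module

@[simp] lemma tensorRepOn_ρ_apply {G : Type u} [Group G] (H : Subgroup G) [H.Normal]
    (W : RepOn (G ⧸ H)) (P : RepOn G) (g : G) (x : (tensorRepOn H W P).V) :
    (tensorRepOn H W P).ρ g x = TensorProduct.map (W.ρ ((g : G ⧸ H))) (P.ρ g) x := rfl

lemma rep_apply_inv_apply {M : Type*} [Group M] {V : Type*} [AddCommGroup V] [Module ℂ V]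
    (ρ : Representation ℂ M V) (m : M) (x : V) : ρ m (ρ m⁻¹ x) = x := by
  rw [← Module.End.mul_apply, ← map_mul, mul_inv_cancel, map_one, Module.End.one_apply]

lemma rep_inv_apply_apply {M : Type*} [Group M] {V : Type*} [AddCommGroup V] [Module ℂ V]
    (ρ : Representation ℂ M V) (m : M) (x : V) : ρ m⁻¹ (ρ m x) = x := by
  rw [← Module.End.mul_apply, ← map_mul, inv_mul_cancel, map_one, Module.End.one_apply]

namespace S10

variable {Q : Type*} [Group Q] {V : Type*} [AddCommGroup V] [Module ℂ V]

/-- The subspace `U` is invariant under the representation `ρ`. -/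
def Invt (ρ : Representation ℂ Q V) (U : Submodule ℂ V) : Prop :=
  ∀ (a : Q) (v : V), v ∈ U → ρ a v ∈ U

/-- The restriction of a representation to an invariant subspace. -/
def subRep (ρ : Representation ℂ Q V) (U : Submodule ℂ V) (hU : Invt ρ U) :
    Representation ℂ Q ↥U where
  toFun a := (ρ a).restrict (p := U) (q := U) (fun v hv => hU a v hv)
  map_one' := by
    refine LinearMap.ext fun v => Subtype.ext ?_
    simp [LinearMap.restrict_apply]
  map_mul' a b := by
    refine LinearMap.ext fun v => Subtype.ext ?_
    simp [LinearMap.restrict_apply, Module.End.mul_apply]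

@[simp] lemma subRep_coe (ρ : Representation ℂ Q V) (U : Submodule ℂ V) (hU : Invt ρ U)
    (a : Q) (v : ↥U) : ((subRep ρ U hU a v : ↥U) : V) = ρ a ↑v := rfl

/-- Maschke averaging: an invariant subspace of an invariant subspace admits an invariant
relative complement. -/
theorem averaging [Finite Q] (ρ : Representation ℂ Q V) (U U' : Submodule ℂ V)
    (hU : Invt ρ U) (hU' : Invt ρ U') (hle : U' ≤ U) :
    ∃ U'' : Submodule ℂ V, Invt ρ U'' ∧ U'' ≤ U ∧ U' ⊓ U'' = ⊥ ∧ U ≤ U' ⊔ U'' := by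
  classical
  cases nonempty_fintype Q
  obtain ⟨q, hq⟩ := Submodule.exists_isCompl U'
  set π₀ : V →ₗ[ℂ] V := U'.subtype ∘ₗ U'.projectionOnto q hq with hπ₀
  have hπ₀mem : ∀ x, π₀ x ∈ U' := fun x => (U'.projectionOnto q hq x).2
  have hπ₀fix : ∀ x ∈ U', π₀ x = x := by
    intro x hx
    have h := Submodule.linearProjOfIsCompl_apply_left hq ⟨x, hx⟩
    simp only [hπ₀, LinearMap.comp_apply]
    rw [show ((⟨x, hx⟩ : U') : V) = x from rfl] at h
    rw [h]
    rfl
  set n : ℂ := (Fintype.card Q : ℂ) with hn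
  have hn0 : n ≠ 0 := Nat.cast_ne_zero.mpr Fintype.card_ne_zero
  set π : V →ₗ[ℂ] V := n⁻¹ • ∑ a : Q, ((ρ a⁻¹) ∘ₗ π₀ ∘ₗ (ρ a)) with hπ
  have hπapp : ∀ x, π x = n⁻¹ • ∑ a : Q, ρ a⁻¹ (π₀ (ρ a x)) := by
    intro x
    rw [hπ]
    simp [LinearMap.sum_apply, LinearMap.comp_apply]
  have hmem : ∀ x, π x ∈ U' := by
    intro x
    rw [hπapp]
    exact Submodule.smul_mem _ _ (Submodule.sum_mem _ fun a _ => hU' a⁻¹ _ (hπ₀mem _))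
  have hfix : ∀ x ∈ U', π x = x := by
    intro x hx
    rw [hπapp]
    have hterm : ∀ a : Q, ρ a⁻¹ (π₀ (ρ a x)) = x := by
      intro a
      rw [hπ₀fix _ (hU' a x hx), rep_inv_apply_apply]
    rw [Finset.sum_congr rfl fun a _ => hterm a, Finset.sum_const, Finset.card_univ,
      ← Nat.cast_smul_eq_nsmul ℂ, smul_smul, inv_mul_cancel₀ hn0, one_smul]
  have hequiv : ∀ (b : Q) (x : V), π (ρ b x) = ρ b (π x) := by
    intro b x
    rw [hπapp, hπapp, map_smul, map_sum]
    congr 1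
    refine Fintype.sum_equiv (Equiv.mulRight b) _ _ fun a => ?_
    simp only [Equiv.coe_mulRight]
    have e1 : ρ (a * b) x = ρ a (ρ b x) := by rw [map_mul]; rfl
    have hb : b * (a * b)⁻¹ = a⁻¹ := by group
    rw [← Module.End.mul_apply (ρ b), ← map_mul, hb, e1]
  refine ⟨LinearMap.ker π ⊓ U, ?_, inf_le_right, ?_, ?_⟩
  · intro a v hv
    refine ⟨?_, hU a v hv.2⟩
    have h0 : π v = 0 := hv.1
    simp [LinearMap.mem_ker, hequiv a v, h0]
  · rw [eq_bot_iff]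
    rintro x ⟨hx1, hx2, -⟩
    have h1 : π x = x := hfix x hx1
    have h0 : π x = 0 := hx2
    rw [Submodule.mem_bot, ← h1]
    exact h0
  · intro x hx
    have h1 : π x ∈ U' := hmem x
    have h2 : x - π x ∈ LinearMap.ker π ⊓ U := by
      refine ⟨?_, Submodule.sub_mem _ hx (hle h1)⟩
      simp [LinearMap.mem_ker, map_sub, hfix _ h1]
    have h3 : π x + (x - π x) = x := by abel
    exact h3 ▸ Submodule.add_mem_sup h1 h2

/-- Every finite-dimensional invariant subspace lies below the sup of invariant subspaces
on which the representation restricts irreducibly. -/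
theorem le_sSup_irr [Finite Q] (ρ : Representation ℂ Q V) (n : ℕ) :
    ∀ U : Submodule ℂ V, Invt ρ U → FiniteDimensional ℂ ↥U → finrank ℂ ↥U ≤ n →
      U ≤ sSup {U : Submodule ℂ V | ∃ h : Invt ρ U, IsIrreducibleRep (subRep ρ U h)} := by
  induction n with
  | zero =>
    intro U _ hfd hr
    have h0 : finrank ℂ ↥U = 0 := Nat.le_zero.mp hr
    have : U = ⊥ := Submodule.finrank_eq_zero.mp h0
    exact this ▸ bot_le
  | succ n ih =>
    intro U hU hfd hr
    by_cases hbot : U = ⊥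
    · exact hbot ▸ bot_le
    · set S' : Set ℕ :=
        {m | ∃ U' : Submodule ℂ V, (U' ≤ U ∧ Invt ρ U' ∧ U' ≠ ⊥) ∧ finrank ℂ ↥U' = m} with hS'
      have hne : (finrank ℂ ↥U) ∈ S' := ⟨U, ⟨le_rfl, hU, hbot⟩, rfl⟩
      obtain ⟨U', ⟨hU'le, hU'inv, hU'ne⟩, hU'rank⟩ := Nat.sInf_mem (Set.nonempty_of_mem hne)
      have hmin : ∀ W : Submodule ℂ V, W ≤ U → Invt ρ W → W ≠ ⊥ →
          sInf S' ≤ finrank ℂ ↥W := fun W h1 h2 h3 => Nat.sInf_le ⟨W, ⟨h1, h2, h3⟩, rfl⟩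
      haveI hfdU' : FiniteDimensional ℂ ↥U' := Submodule.finiteDimensional_of_le hU'le
      have hirr : IsIrreducibleRep (subRep ρ U' hU'inv) := by
        constructor
        · obtain ⟨v, hv, hv0⟩ := Submodule.exists_mem_ne_zero_of_ne_bot hU'ne
          exact ⟨⟨v, hv⟩, fun h => hv0 (congrArg Subtype.val h)⟩
        · intro W hW
          by_cases hWbot : W = ⊥
          · exact Or.inl hWbot
          · right
            set W'' : Submodule ℂ V := W.map U'.subtype with hW''def
            have hW''ne : W'' ≠ ⊥ := by
              obtain ⟨w, hw, hw0⟩ := (Submodule.ne_bot_iff W).mp hWbot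
              refine (Submodule.ne_bot_iff W'').mpr
                ⟨↑w, Submodule.mem_map_of_mem hw, fun h => hw0 (Subtype.ext h)⟩
            have hW''inv : Invt ρ W'' := by
              intro a v hv
              rw [hW''def, Submodule.mem_map] at hv
              obtain ⟨w, hw, rfl⟩ := hv
              exact Submodule.mem_map_of_mem (hW a w hw)
            have hW''le : W'' ≤ U' := Submodule.map_subtype_le _ _
            have hW''eq : W'' = U' := by
              refine Submodule.eq_of_le_of_finrank_le hW''le ?_
              rw [hU'rank]
              exact hmin W'' (hW''le.trans hU'le) hW''inv hW''ne
            have hmap : W.map U'.subtype = (⊤ : Submodule ℂ ↥U').map U'.subtype := by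
              rw [Submodule.map_top, Submodule.range_subtype]
              exact hW''eq
            exact Submodule.map_injective_of_injective U'.injective_subtype hmap
      obtain ⟨U'', hU''inv, hU''le, hinf, hsup⟩ := averaging ρ U U' hU hU'inv hU'le
      haveI hfdU'' : FiniteDimensional ℂ ↥U'' := Submodule.finiteDimensional_of_le hU''le
      have hneU : U'' ≠ U := by
        intro h
        apply hU'ne
        have h2 : U' ≤ U'' := h ▸ hU'le
        rw [eq_bot_iff, ← hinf]
        exact le_inf le_rfl h2
      have hrank'' : finrank ℂ ↥U'' ≤ n := by
        have := Submodule.finrank_lt_finrank_of_lt (lt_of_le_of_ne hU''le hneU)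
        omega
      have hU'mem : U' ∈ {U : Submodule ℂ V | ∃ h : Invt ρ U,
          IsIrreducibleRep (subRep ρ U h)} := ⟨hU'inv, hirr⟩
      calc U ≤ U' ⊔ U'' := hsup
        _ ≤ _ := sup_le (le_sSup hU'mem) (ih U'' hU''inv hfdU'' hrank'')

/-- Semisimplicity: the invariant irreducible subspaces span. -/
theorem sSup_irr_eq_top [Finite Q] (ρ : Representation ℂ Q V) :
    sSup {U : Submodule ℂ V | ∃ h : Invt ρ U, IsIrreducibleRep (subRep ρ U h)} = ⊤ := by
  classical
  cases nonempty_fintype Q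
  rw [eq_top_iff]
  intro v _
  set Uv : Submodule ℂ V := Submodule.span ℂ (Set.range fun a : Q => ρ a v) with hUv
  have hmem : v ∈ Uv := Submodule.subset_span ⟨1, by simp⟩
  have hinv : Invt ρ Uv := by
    intro a w hw
    have h1 : Submodule.map (ρ a) Uv ≤ Uv := by
      rw [hUv, Submodule.map_span, Submodule.span_le]
      rintro x ⟨y, ⟨b, rfl⟩, rfl⟩
      refine Submodule.subset_span ⟨a * b, ?_⟩
      show ρ (a * b) v = ρ a (ρ b v)
      rw [map_mul]
      rfl
    exact h1 ⟨w, hw, rfl⟩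
  haveI : FiniteDimensional ℂ ↥Uv := FiniteDimensional.span_of_finite ℂ (Set.finite_range _)
  exact le_sSup_irr ρ (finrank ℂ ↥Uv) Uv hinv ‹_› le_rfl hmem

end S10

section Parts

variable {G : Type u} [Group G]

/-- (1) ⇒ (2). -/
theorem one_to_two (H : Subgroup G) [H.Normal]
    (C : Set (RepOn G))
    (htens : ∀ P ∈ C, ∀ W : RepOn (G ⧸ H), tensorRepOn H W P ∈ C)
    (φ : ∀ P : RepOn G, P.V →ₗ[ℂ] P.V) (g : G)
    (h1 : HCommutes H C (fun P => P.ρ g⁻¹ ∘ₗ φ P)) :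
    ∀ P ∈ C, ∀ W : RepOn (G ⧸ H),
      φ (tensorRepOn H W P) = TensorProduct.map (W.ρ ((g : G ⧸ H))) (φ P) := by
  intro P hP W
  apply TensorProduct.ext'
  intro w v
  have hint : ∀ h : H, (TensorProduct.mk ℂ W.V P.V w) ∘ₗ P.ρ ↑h
      = (tensorRepOn H W P).ρ ↑h ∘ₗ (TensorProduct.mk ℂ W.V P.V w) := by
    intro h
    apply LinearMap.ext
    intro x
    have h1' : (((h : G) : G ⧸ H)) = 1 := (QuotientGroup.eq_one_iff _).mpr h.2
    show w ⊗ₜ[ℂ] (P.ρ ↑h x) = TensorProduct.map (W.ρ (((h : G) : G ⧸ H))) (P.ρ ↑h) (w ⊗ₜ[ℂ] x)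
    rw [TensorProduct.map_tmul, h1', map_one, Module.End.one_apply]
  have key := h1 P hP (tensorRepOn H W P) (htens P hP W) (TensorProduct.mk ℂ W.V P.V w) hint
  have keyv := LinearMap.congr_fun key v
  change w ⊗ₜ[ℂ] (P.ρ g⁻¹ (φ P v)) = (tensorRepOn H W P).ρ g⁻¹ (φ (tensorRepOn H W P) (w ⊗ₜ[ℂ] v)) at keyv
  have key2 := congrArg ((tensorRepOn H W P).ρ g) keyv
  rw [rep_apply_inv_apply] at key2
  refine Eq.trans key2.symm ?_
  refine Eq.trans
    (TensorProduct.map_tmul (W.ρ ((g : G ⧸ H))) (P.ρ g) w (P.ρ g⁻¹ ((φ P) v))) ?_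
  rw [rep_apply_inv_apply]
  exact (TensorProduct.map_tmul _ _ _ _).symm

/-- The regular representation of `G ⧸ H` by right translations. -/
def regρ (H : Subgroup G) [H.Normal] : Representation ℂ (G ⧸ H) ((G ⧸ H) → ℂ) where
  toFun a :=
    { toFun := fun f => fun y => f (y * a)
      map_add' := fun f₁ f₂ => rfl
      map_smul' := fun c f => rfl }
  map_one' := by
    refine LinearMap.ext fun f => funext fun y => ?_
    simp
  map_mul' a b := by
    refine LinearMap.ext fun f => funext fun y => ?_
    simp [Module.End.mul_apply, mul_assoc]

@[simp] lemma regρ_apply (H : Subgroup G) [H.Normal] (a : G ⧸ H) (f : (G ⧸ H) → ℂ)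
    (y : G ⧸ H) : regρ H a f y = f (y * a) := rfl

/-- The bundled regular representation. -/
def regRepOn (H : Subgroup G) [H.Normal] : RepOn (G ⧸ H) :=
  { V := (G ⧸ H) → ℂ, ρ := regρ H }

/-- (2) ⇒ (1). -/
theorem two_to_one (H : Subgroup G) [H.Normal] [Finite (G ⧸ H)]
    (C : Set (RepOn G))
    (htens : ∀ P ∈ C, ∀ W : RepOn (G ⧸ H), tensorRepOn H W P ∈ C)
    (φ : ∀ P : RepOn G, P.V →ₗ[ℂ] P.V) (hφ : Commutes C φ) (g : G)
    (h2 : ∀ P ∈ C, ∀ W : RepOn (G ⧸ H),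
      φ (tensorRepOn H W P) = TensorProduct.map (W.ρ ((g : G ⧸ H))) (φ P)) :
    HCommutes H C (fun P => P.ρ g⁻¹ ∘ₗ φ P) := by
  classical
  cases nonempty_fintype (G ⧸ H)
  intro P₁ hP₁ P₂ hP₂ α hα
  -- the family of twisted intertwiners, indexed by `G ⧸ H`
  set c : (G ⧸ H) → (P₁.V →ₗ[ℂ] P₂.V) := fun q =>
    Quotient.liftOn' q (fun x => P₂.ρ x⁻¹ ∘ₗ α ∘ₗ P₁.ρ x) (by
      intro x y hxy
      rw [QuotientGroup.leftRel_apply] at hxy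
      set h' : G := x * (x⁻¹ * y) * x⁻¹ with hh'
      have hh'H : h' ∈ H := Subgroup.Normal.conj_mem ‹H.Normal› _ hxy x
      have hy : y = h' * x := by rw [hh']; group
      apply LinearMap.ext
      intro v
      simp only [LinearMap.comp_apply]
      rw [hy]
      have e1 : P₁.ρ (h' * x) v = P₁.ρ h' (P₁.ρ x v) := by rw [map_mul]; rfl
      have e2 : α (P₁.ρ h' (P₁.ρ x v)) = P₂.ρ h' (α (P₁.ρ x v)) := by
        have := LinearMap.congr_fun (hα ⟨h', hh'H⟩) (P₁.ρ x v)
        simpa [LinearMap.comp_apply] using this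
      rw [e1, e2, ← Module.End.mul_apply (P₂.ρ (h' * x)⁻¹), ← map_mul]
      have e3 : (h' * x)⁻¹ * h' = x⁻¹ := by group
      rw [e3]) with hc
  have c_mk : ∀ x : G, c (QuotientGroup.mk x) = P₂.ρ x⁻¹ ∘ₗ α ∘ₗ P₁.ρ x := fun x => rfl
  have c_shift : ∀ (q : G ⧸ H) (b : G), c q ∘ₗ P₁.ρ b = P₂.ρ b ∘ₗ c (q * ↑b) := by
    intro q b
    induction q using Quotient.inductionOn' with
    | h x =>
      show c (QuotientGroup.mk x) ∘ₗ P₁.ρ b = P₂.ρ b ∘ₗ c ((QuotientGroup.mk x : G ⧸ H) * ((b : G) : G ⧸ H))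
      rw [← QuotientGroup.mk_mul, c_mk, c_mk]
      apply LinearMap.ext
      intro v
      simp only [LinearMap.comp_apply]
      have e1 : P₁.ρ (x * b) v = P₁.ρ x (P₁.ρ b v) := by rw [map_mul]; rfl
      have e2 : ∀ y, P₂.ρ b (P₂.ρ (x * b)⁻¹ y) = P₂.ρ x⁻¹ y := by
        intro y
        rw [← Module.End.mul_apply, ← map_mul]
        have e3 : b * (x * b)⁻¹ = x⁻¹ := by group
        rw [e3]
      rw [e1, e2]
  set γ : P₁.V →ₗ[ℂ] ((G ⧸ H) → ℂ) ⊗[ℂ] P₂.V :=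
    ∑ q : G ⧸ H, (TensorProduct.mk ℂ ((G ⧸ H) → ℂ) P₂.V (Pi.single q 1)) ∘ₗ c q with hγ
  have hγapp : ∀ v, γ v = ∑ q : G ⧸ H, (Pi.single q (1 : ℂ)) ⊗ₜ[ℂ] (c q v) := by
    intro v
    rw [hγ]
    simp [LinearMap.sum_apply, TensorProduct.mk_apply]
  have hγint' : ∀ m : G, γ ∘ₗ P₁.ρ m =
      (TensorProduct.map (regρ H ((m : G ⧸ H))) (P₂.ρ m)) ∘ₗ γ := by
    intro m
    apply LinearMap.ext
    intro v
    simp only [LinearMap.comp_apply]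
    rw [hγapp, hγapp, map_sum]
    refine Fintype.sum_equiv (Equiv.mulRight ((m : G ⧸ H))) _ _ fun q => ?_
    simp only [Equiv.coe_mulRight, TensorProduct.map_tmul]
    have e1 : regρ H ((m : G ⧸ H)) (Pi.single (q * (m : G ⧸ H)) (1 : ℂ)) =
        Pi.single q 1 := by
      funext y
      rw [regρ_apply, Pi.single_apply, Pi.single_apply]
      simp [mul_left_inj]
    have e2 : c q (P₁.ρ m v) = P₂.ρ m (c (q * (m : G ⧸ H)) v) := by
      have := LinearMap.congr_fun (c_shift q m) v
      simpa [LinearMap.comp_apply] using this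
    rw [e1, e2]
  have hγint : ∀ m : G,
      γ ∘ₗ P₁.ρ m = (tensorRepOn H (regRepOn H) P₂).ρ m ∘ₗ γ := fun m => hγint' m
  have hcommγ := hφ P₁ hP₁ (tensorRepOn H (regRepOn H) P₂) (htens P₂ hP₂ (regRepOn H)) γ hγint
  have hTWφ : φ (tensorRepOn H (regRepOn H) P₂) =
      TensorProduct.map (regρ H ((g : G ⧸ H))) (φ P₂) := h2 P₂ hP₂ (regRepOn H)
  set E : (((G ⧸ H) → ℂ) ⊗[ℂ] P₂.V) →ₗ[ℂ] P₂.V :=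
    (TensorProduct.lid ℂ P₂.V).toLinearMap ∘ₗ
      (LinearMap.rTensor P₂.V (LinearMap.proj (((g : G ⧸ H))⁻¹))) with hE
  have hEt : ∀ (f : (G ⧸ H) → ℂ) (u : P₂.V), E (f ⊗ₜ[ℂ] u) = f (((g : G ⧸ H))⁻¹) • u := by
    intro f u
    rw [hE]
    simp [LinearMap.rTensor_tmul, TensorProduct.lid_tmul]
  apply LinearMap.ext
  intro v
  have hev : γ ((φ P₁) v) =
      TensorProduct.map (regρ H ((g : G ⧸ H))) (φ P₂) (γ v) := by
    have h := LinearMap.congr_fun hcommγ v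
    change γ (φ P₁ v) = φ (tensorRepOn H (regRepOn H) P₂) (γ v) at h
    rw [hTWφ] at h
    exact h
  -- hev : γ (φ P₁ v) = map ((regRepOn H).ρ ↑g) (φ P₂) (γ v)
  have hL : ∀ x : P₁.V, E (γ x) = c (((g : G ⧸ H))⁻¹) x := by
    intro x
    rw [hγapp, map_sum]
    have step : ∀ q : G ⧸ H, E ((Pi.single q (1 : ℂ)) ⊗ₜ[ℂ] (c q x)) =
        if ((g : G ⧸ H))⁻¹ = q then c q x else 0 := by
      intro q
      rw [hEt, Pi.single_apply]
      split <;> simp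
    rw [Finset.sum_congr rfl fun q _ => step q,
      Finset.sum_ite_eq Finset.univ (((g : G ⧸ H))⁻¹) (fun q => c q x)]
    try simp
  have hR : E (TensorProduct.map (regρ H ((g : G ⧸ H))) (φ P₂) (γ v)) =
      φ P₂ (α v) := by
    rw [hγapp, map_sum, map_sum]
    have step : ∀ q : G ⧸ H,
        E (TensorProduct.map (regρ H ((g : G ⧸ H))) (φ P₂)
          ((Pi.single q (1 : ℂ)) ⊗ₜ[ℂ] (c q v))) =
        if (1 : G ⧸ H) = q then φ P₂ (c q v) else 0 := by
      intro q
      rw [TensorProduct.map_tmul, hEt]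
      have e1 : (regρ H ((g : G ⧸ H)) (Pi.single q (1 : ℂ))) (((g : G ⧸ H))⁻¹) =
          if (1 : G ⧸ H) = q then 1 else 0 := by
        rw [regρ_apply, inv_mul_cancel, Pi.single_apply]
      rw [e1]
      split <;> simp
    rw [Finset.sum_congr rfl fun q _ => step q,
      Finset.sum_ite_eq Finset.univ (1 : G ⧸ H) (fun q => φ P₂ (c q v))]
    rw [if_pos (Finset.mem_univ _)]
    congr 1
    rw [← QuotientGroup.mk_one, c_mk]
    simp
  have hkey := congrArg E hev
  have hkey2 := ((hL ((φ P₁) v)).symm.trans hkey).trans hR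
  have hcg : c (((g : G ⧸ H))⁻¹) = P₂.ρ g ∘ₗ α ∘ₗ P₁.ρ g⁻¹ := by
    rw [← QuotientGroup.mk_inv, c_mk, inv_inv]
  rw [hcg] at hkey2
  simp only [LinearMap.comp_apply] at hkey2
  show α (P₁.ρ g⁻¹ ((φ P₁) v)) = P₂.ρ g⁻¹ ((φ P₂) (α v))
  have hfin := congrArg (P₂.ρ g⁻¹) hkey2
  rwa [rep_inv_apply_apply] at hfin

/-- The bundled subrepresentation on an invariant subspace. -/
def subRepOn {Q : Type u} [Group Q] (W : RepOn Q) (U : Submodule ℂ W.V)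
    (hU : S10.Invt W.ρ U) : RepOn Q :=
  { V := ↥U, ρ := S10.subRep W.ρ U hU }

/-- (3) ⇒ (2). -/
theorem three_to_two (H : Subgroup G) [H.Normal] [Finite (G ⧸ H)]
    (C : Set (RepOn G))
    (htens : ∀ P ∈ C, ∀ W : RepOn (G ⧸ H), tensorRepOn H W P ∈ C)
    (φ : ∀ P : RepOn G, P.V →ₗ[ℂ] P.V) (hφ : Commutes C φ) (g : G)
    (h3 : ∀ P ∈ C, ∀ W : RepOn (G ⧸ H), IsIrreducibleRep W.ρ →
      φ (tensorRepOn H W P) = TensorProduct.map (W.ρ ((g : G ⧸ H))) (φ P)) :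
    ∀ P ∈ C, ∀ W : RepOn (G ⧸ H),
      φ (tensorRepOn H W P) = TensorProduct.map (W.ρ ((g : G ⧸ H))) (φ P) := by
  intro P hP W
  have htop : ∀ w : W.V, ∀ v : P.V,
      φ (tensorRepOn H W P) (w ⊗ₜ[ℂ] v) = (W.ρ ((g : G ⧸ H)) w) ⊗ₜ[ℂ] (φ P v) := by
    intro w
    have hsup : w ∈ sSup {U : Submodule ℂ W.V | ∃ h : S10.Invt W.ρ U,
        IsIrreducibleRep (S10.subRep W.ρ U h)} := by
      rw [S10.sSup_irr_eq_top W.ρ]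
      trivial
    rw [sSup_eq_iSup'] at hsup
    refine Submodule.iSup_induction (x := w) _ hsup ?_ ?_ ?_
    · rintro ⟨U, hUinv, hUirr⟩ w hw v
      have hιint : ∀ m : G,
          (TensorProduct.map U.subtype (LinearMap.id (R := ℂ) (M := P.V))) ∘ₗ
            (tensorRepOn H (subRepOn W U hUinv) P).ρ m =
          (tensorRepOn H W P).ρ m ∘ₗ
            (TensorProduct.map U.subtype (LinearMap.id (R := ℂ) (M := P.V))) := by
        intro m
        apply TensorProduct.ext'
        intro u x
        erw [LinearMap.comp_apply]
      have hcomm := hφ (tensorRepOn H (subRepOn W U hUinv) P) (htens P hP (subRepOn W U hUinv))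
        (tensorRepOn H W P) (htens P hP W)
        (TensorProduct.map U.subtype (LinearMap.id (R := ℂ) (M := P.V))) hιint
      have h3' := h3 P hP (subRepOn W U hUinv) hUirr
      have heval : (TensorProduct.map U.subtype (LinearMap.id (R := ℂ) (M := P.V)))
            (φ (tensorRepOn H (subRepOn W U hUinv) P) ((⟨w, hw⟩ : ↥U) ⊗ₜ[ℂ] v)) =
          φ (tensorRepOn H W P)
            ((TensorProduct.map U.subtype (LinearMap.id (R := ℂ) (M := P.V)))
              ((⟨w, hw⟩ : ↥U) ⊗ₜ[ℂ] v)) :=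
        LinearMap.congr_fun hcomm _
      rw [h3'] at heval
      refine Eq.trans (Eq.symm heval) ?_
      refine Eq.trans (congrArg
        (fun z => (TensorProduct.map U.subtype (LinearMap.id (R := ℂ) (M := P.V))) z)
        (TensorProduct.map_tmul ((subRepOn W U hUinv).ρ ((g : G ⧸ H))) (φ P)
          (⟨w, hw⟩ : ↥U) v)) ?_
      exact TensorProduct.map_tmul _ _ _ _
    · intro v
      erw [TensorProduct.zero_tmul, map_zero, map_zero, TensorProduct.zero_tmul]
      rfl
    · intro x y hx hy v
      erw [TensorProduct.add_tmul, map_add, map_add, TensorProduct.add_tmul, hx v, hy v]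
      rfl
  apply TensorProduct.ext'
  intro w v
  exact (htop w v).trans (TensorProduct.map_tmul _ _ _ _).symm

end Parts

end Aux

/-- Let `H ◁ G` be of finite index with `G/H` abelian and `C` a class of
representations of `G` stable under tensoring by representations of `G/H`.  For an
endomorphism `φ` of the forgetful functor on `C` and `g ∈ G`, the following are
equivalent: (1) `δ̂_{g⁻¹} φ` commutes with all `H`-intertwiners between members of `C`
(`φ` is supported in `gH`); (2) `φ(ρ ⊗ π) = ρ(g) ⊗ φ(π)` for all `π ∈ C` and all
representations `ρ` of `G/H`; (3) the same with `ρ` ranging only over the irreducible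
representations of `G/H`. -/
theorem statement10 {G : Type u} [Group G] (H : Subgroup G) [H.Normal] [Finite (G ⧸ H)]
    (hab : ∀ a b : G ⧸ H, a * b = b * a)
    (C : Set (RepOn G))
    (htens : ∀ P ∈ C, ∀ W : RepOn (G ⧸ H), tensorRepOn H W P ∈ C)
    (φ : ∀ P : RepOn G, P.V →ₗ[ℂ] P.V) (hφ : Commutes C φ) (g : G) :
    (HCommutes H C (fun P => P.ρ g⁻¹ ∘ₗ φ P) ↔
      ∀ P ∈ C, ∀ W : RepOn (G ⧸ H),
        φ (tensorRepOn H W P) = TensorProduct.map (W.ρ ((g : G ⧸ H))) (φ P)) ∧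
    ((∀ P ∈ C, ∀ W : RepOn (G ⧸ H),
        φ (tensorRepOn H W P) = TensorProduct.map (W.ρ ((g : G ⧸ H))) (φ P)) ↔
      ∀ P ∈ C, ∀ W : RepOn (G ⧸ H), IsIrreducibleRep W.ρ →
        φ (tensorRepOn H W P) = TensorProduct.map (W.ρ ((g : G ⧸ H))) (φ P)) := by
  constructor
  · constructor
    · exact fun h1 => one_to_two H C htens φ g h1
    · exact fun h2 => two_to_one H C htens φ hφ g h2
  · constructor
    · exact fun h2 P hP W _ => h2 P hP W
    · exact fun h3 => three_to_two H C htens φ hφ g h3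
end
end

section
/- Let G be a group and H ◁ G of finite index. Define the restriction of an endomorphism φ of the forgetful functor on a category C of representations of G by r_H^G(φ)(π) = e₁ ∘ φ(Ind_H^G π) ∘ e₁* for π in the category C_H generated by restrictions of objects of C. Then r_H^G(φ) commutes with all H-intertwiners, i.e. is an endomorphism of the forgetful functor on C_H. -/
noncomputable section

open scoped TensorProduct DirectSum

universe u

/-- Let `H ◁ G` be of finite index, `C` a class of representations of
`G`, `CH` a class of representations of `H` with `Ind_H^G σ ∈ C` for all `σ ∈ CH`.  If `φ`
is an endomorphism of the forgetful functor on `C`, then its restriction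
`r_H^G(φ) : σ ↦ e₁ ∘ φ(Ind_H^G σ) ∘ e₁^*` commutes with all `H`-intertwiners between
members of `CH`, i.e. it is an endomorphism of the forgetful functor on `CH`. -/
theorem statement13 {G : Type u} [Group G] (H : Subgroup G) [H.Normal] [Finite (G ⧸ H)]
    [DecidablePred (· ∈ H)]
    (C : Set (RepOn G)) (CH : Set (RepOn ↥H))
    (hInd : ∀ σ ∈ CH, indRepOn H σ ∈ C)
    (φ : ∀ P : RepOn G, P.V →ₗ[ℂ] P.V) (hφ : Commutes C φ) :
    Commutes CH (fun σ => evalAt H σ.ρ 1 ∘ₗ φ (indRepOn H σ) ∘ₗ extAt H σ.ρ 1) := by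
  intro σ₁ h₁ σ₂ h₂ α hα
  have hα' : ∀ (h : H) (v : σ₁.V), α (σ₁.ρ h v) = σ₂.ρ h (α v) := by
    intro h v
    have := congrFun (congrArg DFunLike.coe (hα h)) v
    simpa using this
  set A : ↥(IndSpace H σ₁.ρ) →ₗ[ℂ] ↥(IndSpace H σ₂.ρ) := indMap H σ₁.ρ σ₂.ρ α hα'
  have hAg : ∀ g : G, A ∘ₗ indRep H σ₁.ρ g = indRep H σ₂.ρ g ∘ₗ A := by
    intro g
    apply LinearMap.ext; intro w
    apply Subtype.ext; funext x
    show α (((indRep H σ₁.ρ g w : ↥(IndSpace H σ₁.ρ)) : G → σ₁.V) x)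
        = ((indRep H σ₂.ρ g (A w) : ↥(IndSpace H σ₂.ρ)) : G → σ₂.V) x
    rw [indRep_apply, indRep_apply]
    rfl
  have hcomm := hφ _ (hInd σ₁ h₁) _ (hInd σ₂ h₂) A hAg
  -- α ∘ e₁ = e₁ ∘ A
  have he : α ∘ₗ evalAt H σ₁.ρ 1 = evalAt H σ₂.ρ 1 ∘ₗ A := by
    apply LinearMap.ext; intro w; rfl
  -- A ∘ e₁* = e₁* ∘ α
  have hext : A ∘ₗ extAt H σ₁.ρ 1 = extAt H σ₂.ρ 1 ∘ₗ α := by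
    apply LinearMap.ext; intro v
    apply Subtype.ext; funext x
    show α ((extAt H σ₁.ρ 1 v : G → σ₁.V) x) = (extAt H σ₂.ρ 1 (α v) : G → σ₂.V) x
    show α (if hx : x * 1⁻¹ ∈ H then σ₁.ρ ⟨x * 1⁻¹, hx⟩ v else 0)
        = (if hx : x * 1⁻¹ ∈ H then σ₂.ρ ⟨x * 1⁻¹, hx⟩ (α v) else 0)
    by_cases hx : x * 1⁻¹ ∈ H
    · rw [dif_pos hx, dif_pos hx, hα']
    · rw [dif_neg hx, dif_neg hx, map_zero]
  calc α ∘ₗ (evalAt H σ₁.ρ 1 ∘ₗ φ (indRepOn H σ₁) ∘ₗ extAt H σ₁.ρ 1)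
      = (α ∘ₗ evalAt H σ₁.ρ 1) ∘ₗ φ (indRepOn H σ₁) ∘ₗ extAt H σ₁.ρ 1 := by
        rw [LinearMap.comp_assoc]
    _ = evalAt H σ₂.ρ 1 ∘ₗ (A ∘ₗ φ (indRepOn H σ₁)) ∘ₗ extAt H σ₁.ρ 1 := by
        rw [he]; rfl
    _ = evalAt H σ₂.ρ 1 ∘ₗ φ (indRepOn H σ₂) ∘ₗ (A ∘ₗ extAt H σ₁.ρ 1) := by
        exact congrArg (fun T : (indRepOn H σ₁).V →ₗ[ℂ] ↥(IndSpace H σ₂.ρ) =>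
          evalAt H σ₂.ρ 1 ∘ₗ T ∘ₗ extAt H σ₁.ρ 1) hcomm
    _ = (evalAt H σ₂.ρ 1 ∘ₗ φ (indRepOn H σ₂) ∘ₗ extAt H σ₂.ρ 1) ∘ₗ α := by
        exact congrArg (fun T : σ₁.V →ₗ[ℂ] ↥(IndSpace H σ₂.ρ) =>
          evalAt H σ₂.ρ 1 ∘ₗ φ (indRepOn H σ₂) ∘ₗ T) hext
end
end

section
/- Let G be a locally profinite unimodular group, H ◁ G open of finite index, S a system of representatives of G/H. For F smooth compactly supported on G and π a smooth representation of H with Π = Ind_H^G π, one has e₁ ∘ Π(F) ∘ e₁* = π(F|_H), where F|_H denotes the restriction of F to H. That is, the restriction of endomorphisms r_H^G commutes with the Fourier transform: (F̂)|_H = (F|_H)^. -/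
noncomputable section

open scoped TensorProduct DirectSum

universe u

/-- (The restriction of endomorphisms commutes with the Fourier
transform.)  For `H ◁ G` open of finite index, a finitely supported `F : G →₀ ℂ` (modelling
a smooth compactly supported function on a locally profinite group, with counting Haar
measure) and a representation `π` of `H` with `Π = Ind_H^G π`, one has
`e₁ ∘ Π(F) ∘ e₁^* = π(F|_H)`, i.e. `r_H^G (F̂) = (F|_H)^`. -/
theorem statement14 {G : Type u} [Group G] (H : Subgroup G) [H.Normal] [Finite (G ⧸ H)]
    [DecidablePred (· ∈ H)]
    {V : Type u} [AddCommGroup V] [Module ℂ V] (π : Representation ℂ H V)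
    (F : G →₀ ℂ) :
    evalAt H π 1 ∘ₗ fourierT F (indRep H π) ∘ₗ extAt H π 1 =
      F.sum fun g c => if hg : g ∈ H then c • (π ⟨g, hg⟩ : V →ₗ[ℂ] V) else 0 := by
  ext v
  simp only [LinearMap.comp_apply, fourierT, Finsupp.sum, LinearMap.coe_sum,
    Finset.sum_apply, map_sum, LinearMap.smul_apply, map_smul, evalAt_apply]
  refine Finset.sum_congr rfl fun g _ => ?_
  have h1 : ((indRep H π g (extAt H π 1 v) : ↥(IndSpace H π)) : G → V) 1
      = ((extAt H π 1 v : ↥(IndSpace H π)) : G → V) g := by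
    rw [indRep_apply, one_mul]
  rw [h1]
  show F g • (if hg : g * 1⁻¹ ∈ H then π ⟨g * 1⁻¹, hg⟩ v else 0) = _
  by_cases hg : g ∈ H
  · rw [dif_pos (by simpa using hg), dif_pos hg]
    simp
  · rw [dif_neg (by simpa using hg), dif_neg hg]
    simp
end
end
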